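/- arXiv:2602.01456 — 7 statements merged into one kernel-verified Lean document; each statement's English description precedes it below -/
import Mathlib

section
/- Let p > 0, μ ∈ ℝ, σ > 0, and let f_{p,μ,σ} be the Generalized Gaussian density. Then for every x ∈ ℝ, the cumulative distribution function satisfies ∫_{−∞}^{x} f_{p,μ,σ}(t) dt = 1/2 + sgn(x−μ) · (1/(2Γ(1/p))) · γ(1/p, |x−μ|^p/(p σ^p)), where sgn is the sign function. -/
open MeasureTheory Real Set

/-- The Generalized Gaussian density with ℓ_p parameter `p`, location `μ` and scale `σ`. -/
noncomputable def ggPdf (p μ σ : ℝ) (x : ℝ) : ℝ :=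
  p ^ (1 - 1 / p) / (2 * σ * Real.Gamma (1 / p)) * Real.exp (-(|x - μ| ^ p) / (p * σ ^ p))

/-- The lower incomplete gamma function `γ(s,t) = ∫₀^t u^{s−1} e^{−u} du`. -/
noncomputable def lowerIncGamma (s t : ℝ) : ℝ :=
  ∫ u in Set.Ioc (0 : ℝ) t, u ^ (s - 1) * Real.exp (-u)

section aux

variable {p σ μ e : ℝ}

lemma gg_hasDerivAt (hp : 0 < p) {u : ℝ} (hu : 0 < u) :
    HasDerivAt (fun u => μ + e * (σ * (p * u) ^ (1 / p)))
      (e * (σ * (p * u) ^ (1 / p - 1))) u := by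
  have hpu : 0 < p * u := by positivity
  have h1 : HasDerivAt (fun u : ℝ => p * u) p u := by
    simpa using (hasDerivAt_id u).const_mul p
  have h2 : HasDerivAt (fun v : ℝ => v ^ (1 / p)) ((1 / p) * (p * u) ^ (1 / p - 1)) (p * u) :=
    Real.hasDerivAt_rpow_const (Or.inl hpu.ne')
  have h3 := (h2.comp u h1).const_mul σ |>.const_mul e |>.const_add μ
  rw [show e * (σ * (p * u) ^ (1 / p - 1)) = e * (σ * (1 / p * (p * u) ^ (1 / p - 1) * p)) by
    field_simp]
  exact h3

lemma gg_injOn (hp : 0 < p) (hσ : 0 < σ) (he : e ≠ 0) {s : Set ℝ} (hsub : s ⊆ Set.Ioi 0) :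
    Set.InjOn (fun u => μ + e * (σ * (p * u) ^ (1 / p))) s := by
  intro u hu v hv h
  have hu0 : 0 < u := hsub hu
  have hv0 : 0 < v := hsub hv
  have h1 : (p * u) ^ (1 / p) = (p * v) ^ (1 / p) := by
    have := add_left_cancel h
    have := mul_left_cancel₀ he this
    exact mul_left_cancel₀ hσ.ne' this
  have h2 : ((p * u) ^ (1 / p)) ^ p = ((p * v) ^ (1 / p)) ^ p := by rw [h1]
  rw [one_div, Real.rpow_inv_rpow (by positivity) hp.ne',
    Real.rpow_inv_rpow (by positivity) hp.ne'] at h2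
  exact mul_left_cancel₀ hp.ne' h2

lemma gg_pointwise (hp : 0 < p) (hσ : 0 < σ) (he : |e| = 1) {u : ℝ} (hu : 0 < u) :
    |e * (σ * (p * u) ^ (1 / p - 1))| * ggPdf p μ σ (μ + e * (σ * (p * u) ^ (1 / p)))
      = 1 / (2 * Real.Gamma (1 / p)) * (u ^ (1 / p - 1) * Real.exp (-u)) := by
  have hΓ : 0 < Real.Gamma (1 / p) := Real.Gamma_pos_of_pos (by positivity)
  have hpu : 0 < p * u := by positivity
  have hσp : 0 < σ ^ p := Real.rpow_pos_of_pos hσ p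
  have habs : |e * (σ * (p * u) ^ (1 / p - 1))| = σ * (p * u) ^ (1 / p - 1) := by
    rw [abs_mul, he, one_mul, abs_of_nonneg (by positivity)]
  have hz : |μ + e * (σ * (p * u) ^ (1 / p)) - μ| ^ p = σ ^ p * (p * u) := by
    rw [add_sub_cancel_left, abs_mul, he, one_mul, abs_of_nonneg (by positivity),
      Real.mul_rpow hσ.le (by positivity), one_div,
      Real.rpow_inv_rpow hpu.le hp.ne']
  have hexp : Real.exp (-(|μ + e * (σ * (p * u) ^ (1 / p)) - μ| ^ p) / (p * σ ^ p))
      = Real.exp (-u) := by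
    rw [hz]
    congr 1
    field_simp
  rw [habs, ggPdf, hexp, Real.mul_rpow hp.le hu.le]
  have hpp : p ^ ((1:ℝ) / p - 1) * p ^ (1 - 1 / p) = 1 := by
    rw [← Real.rpow_add hp, show (1:ℝ) / p - 1 + (1 - 1 / p) = 0 by ring, Real.rpow_zero]
  have key : σ * (p ^ ((1:ℝ) / p - 1) * u ^ ((1:ℝ) / p - 1)) *
      (p ^ (1 - 1 / p) / (2 * σ * Real.Gamma (1 / p)) * Real.exp (-u))
      = (p ^ ((1:ℝ) / p - 1) * p ^ (1 - 1 / p)) *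
        (1 / (2 * Real.Gamma (1 / p)) * (u ^ ((1:ℝ) / p - 1) * Real.exp (-u))) := by
    field_simp
  rw [key, hpp, one_mul]

lemma G_integrable (hp : 0 < p) :
    IntegrableOn (fun u : ℝ => u ^ (1 / p - 1) * Real.exp (-u)) (Set.Ioi 0) :=
  (Real.GammaIntegral_convergent (by positivity : (0:ℝ) < 1 / p)).congr_fun
    (fun x _ => mul_comm _ _) measurableSet_Ioi

lemma G_total (hp : 0 < p) :
    ∫ u in Set.Ioi (0:ℝ), u ^ (1 / p - 1) * Real.exp (-u) = Real.Gamma (1 / p) := by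
  rw [Real.Gamma_eq_integral (by positivity : (0:ℝ) < 1 / p)]
  exact setIntegral_congr_fun measurableSet_Ioi (fun x _ => mul_comm _ _)

lemma gg_cov (hp : 0 < p) (hσ : 0 < σ) (he : |e| = 1)
    {s : Set ℝ} (hms : MeasurableSet s) (hsub : s ⊆ Set.Ioi 0) :
    ∫ t in (fun u => μ + e * (σ * (p * u) ^ (1 / p))) '' s, ggPdf p μ σ t
      = 1 / (2 * Real.Gamma (1 / p)) * ∫ u in s, u ^ (1 / p - 1) * Real.exp (-u) := by
  have he0 : e ≠ 0 := by intro h; simp [h] at he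
  rw [integral_image_eq_integral_abs_deriv_smul hms
      (fun u hu => (gg_hasDerivAt hp (hsub hu)).hasDerivWithinAt)
      (gg_injOn hp hσ he0 hsub), ← integral_const_mul]
  exact setIntegral_congr_fun hms (fun u hu => by
    simpa [smul_eq_mul] using gg_pointwise hp hσ he (hsub hu))

lemma gg_integrableOn_image (hp : 0 < p) (hσ : 0 < σ) (he : |e| = 1)
    {s : Set ℝ} (hms : MeasurableSet s) (hsub : s ⊆ Set.Ioi 0) :
    IntegrableOn (ggPdf p μ σ) ((fun u => μ + e * (σ * (p * u) ^ (1 / p))) '' s) := by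
  have he0 : e ≠ 0 := by intro h; simp [h] at he
  rw [integrableOn_image_iff_integrableOn_abs_deriv_smul hms
      (fun u hu => (gg_hasDerivAt hp (hsub hu)).hasDerivWithinAt)
      (gg_injOn hp hσ he0 hsub)]
  refine IntegrableOn.congr_fun (((G_integrable hp).mono_set hsub).const_mul
    (1 / (2 * Real.Gamma (1 / p)))) (fun u hu => ?_) hms
  simpa [smul_eq_mul] using (gg_pointwise hp hσ he (hsub hu)).symm

lemma img_pos_Ioi (hp : 0 < p) (hσ : 0 < σ) :
    (fun u => μ + 1 * (σ * (p * u) ^ (1 / p))) '' Set.Ioi 0 = Set.Ioi μ := by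
  ext y
  simp only [Set.mem_image, Set.mem_Ioi, one_mul]
  constructor
  · rintro ⟨u, hu, rfl⟩
    have : 0 < σ * (p * u) ^ (1 / p) := by positivity
    linarith
  · intro hy
    refine ⟨((y - μ) / σ) ^ p / p,
      div_pos (Real.rpow_pos_of_pos (div_pos (by linarith) hσ) p) hp, ?_⟩
    rw [mul_div_cancel₀ _ hp.ne', one_div,
      Real.rpow_rpow_inv (div_nonneg (by linarith) hσ.le) hp.ne', mul_div_cancel₀ _ hσ.ne']
    ring

lemma img_pos_Ioo (hp : 0 < p) (hσ : 0 < σ) {T : ℝ} (hT : 0 ≤ T) :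
    (fun u => μ + 1 * (σ * (p * u) ^ (1 / p))) '' Set.Ioo 0 T
      = Set.Ioo μ (μ + 1 * (σ * (p * T) ^ (1 / p))) := by
  ext y
  simp only [Set.mem_image, Set.mem_Ioo, one_mul]
  constructor
  · rintro ⟨u, ⟨hu0, huT⟩, rfl⟩
    have h1 : 0 < σ * (p * u) ^ (1 / p) := by positivity
    have h2 : (p * u) ^ (1 / p) < (p * T) ^ (1 / p) :=
      Real.rpow_lt_rpow (by positivity) (by nlinarith) (by positivity)
    constructor
    · linarith
    · have := mul_lt_mul_of_pos_left h2 hσ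
      linarith
  · rintro ⟨h1, h2⟩
    have hψ : (p * (((y - μ) / σ) ^ p / p)) ^ ((1:ℝ) / p) = (y - μ) / σ := by
      rw [mul_div_cancel₀ _ hp.ne', one_div,
        Real.rpow_rpow_inv (div_nonneg (by linarith) hσ.le) hp.ne']
    refine ⟨((y - μ) / σ) ^ p / p,
      ⟨div_pos (Real.rpow_pos_of_pos (div_pos (by linarith) hσ) p) hp, ?_⟩, ?_⟩
    · by_contra h
      push_neg at h
      have h3 : (p * T) ^ ((1:ℝ) / p) ≤ (p * (((y - μ) / σ) ^ p / p)) ^ ((1:ℝ) / p) :=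
        Real.rpow_le_rpow (mul_nonneg hp.le hT) (by nlinarith) (by positivity)
      rw [hψ] at h3
      have h4 : σ * (p * T) ^ ((1:ℝ) / p) ≤ σ * ((y - μ) / σ) :=
        mul_le_mul_of_nonneg_left h3 hσ.le
      rw [mul_div_cancel₀ _ hσ.ne'] at h4
      linarith
    · rw [hψ, mul_div_cancel₀ _ hσ.ne']
      ring

lemma img_neg_Ioi (hp : 0 < p) (hσ : 0 < σ) :
    (fun u => μ + (-1) * (σ * (p * u) ^ (1 / p))) '' Set.Ioi 0 = Set.Iio μ := by
  ext y
  simp only [Set.mem_image, Set.mem_Ioi, Set.mem_Iio, neg_one_mul]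
  constructor
  · rintro ⟨u, hu, rfl⟩
    have : 0 < σ * (p * u) ^ (1 / p) := by positivity
    linarith
  · intro hy
    refine ⟨((μ - y) / σ) ^ p / p,
      div_pos (Real.rpow_pos_of_pos (div_pos (by linarith) hσ) p) hp, ?_⟩
    rw [mul_div_cancel₀ _ hp.ne', one_div,
      Real.rpow_rpow_inv (div_nonneg (by linarith) hσ.le) hp.ne', mul_div_cancel₀ _ hσ.ne']
    ring

lemma img_neg_Ioo (hp : 0 < p) (hσ : 0 < σ) {T : ℝ} (hT : 0 ≤ T) :
    (fun u => μ + (-1) * (σ * (p * u) ^ (1 / p))) '' Set.Ioo 0 T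
      = Set.Ioo (μ + (-1) * (σ * (p * T) ^ (1 / p))) μ := by
  ext y
  simp only [Set.mem_image, Set.mem_Ioo, neg_one_mul]
  constructor
  · rintro ⟨u, ⟨hu0, huT⟩, rfl⟩
    have h1 : 0 < σ * (p * u) ^ (1 / p) := by positivity
    have h2 : (p * u) ^ (1 / p) < (p * T) ^ (1 / p) :=
      Real.rpow_lt_rpow (by positivity) (by nlinarith) (by positivity)
    constructor
    · have := mul_lt_mul_of_pos_left h2 hσ
      linarith
    · linarith
  · rintro ⟨h1, h2⟩
    have hψ : (p * (((μ - y) / σ) ^ p / p)) ^ ((1:ℝ) / p) = (μ - y) / σ := by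
      rw [mul_div_cancel₀ _ hp.ne', one_div,
        Real.rpow_rpow_inv (div_nonneg (by linarith) hσ.le) hp.ne']
    refine ⟨((μ - y) / σ) ^ p / p,
      ⟨div_pos (Real.rpow_pos_of_pos (div_pos (by linarith) hσ) p) hp, ?_⟩, ?_⟩
    · by_contra h
      push_neg at h
      have h3 : (p * T) ^ ((1:ℝ) / p) ≤ (p * (((μ - y) / σ) ^ p / p)) ^ ((1:ℝ) / p) :=
        Real.rpow_le_rpow (mul_nonneg hp.le hT) (by nlinarith) (by positivity)
      rw [hψ] at h3
      have h4 : σ * (p * T) ^ ((1:ℝ) / p) ≤ σ * ((μ - y) / σ) :=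
        mul_le_mul_of_nonneg_left h3 hσ.le
      rw [mul_div_cancel₀ _ hσ.ne'] at h4
      linarith
    · rw [hψ, mul_div_cancel₀ _ hσ.ne']
      ring

lemma gg_half_Iic (hp : 0 < p) (hσ : 0 < σ) :
    ∫ t in Set.Iic μ, ggPdf p μ σ t = 1 / 2 := by
  have hΓ : 0 < Real.Gamma (1 / p) := Real.Gamma_pos_of_pos (by positivity)
  rw [integral_Iic_eq_integral_Iio, ← img_neg_Ioi hp hσ,
    gg_cov hp hσ (by norm_num) measurableSet_Ioi Set.Subset.rfl, G_total hp]
  field_simp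

lemma gg_integrable_Iic (hp : 0 < p) (hσ : 0 < σ) :
    IntegrableOn (ggPdf p μ σ) (Set.Iic μ) := by
  rw [integrableOn_Iic_iff_integrableOn_Iio, ← img_neg_Ioi hp hσ]
  exact gg_integrableOn_image hp hσ (by norm_num) measurableSet_Ioi Set.Subset.rfl

lemma gg_integrable_Ioi (hp : 0 < p) (hσ : 0 < σ) :
    IntegrableOn (ggPdf p μ σ) (Set.Ioi μ) := by
  rw [← img_pos_Ioi hp hσ]
  exact gg_integrableOn_image hp hσ (by norm_num) measurableSet_Ioi Set.Subset.rfl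

end aux

/-- The CDF of the Generalized Gaussian distribution:
`∫_{−∞}^{x} f_{p,μ,σ}(t) dt = 1/2 + sgn(x−μ) · (1/(2Γ(1/p))) · γ(1/p, |x−μ|^p/(p σ^p))`. -/
theorem genGaussian_cdf (p μ σ : ℝ) (hp : 0 < p) (hσ : 0 < σ) (x : ℝ) :
    ∫ t in Set.Iic x, ggPdf p μ σ t =
      1 / 2 + Real.sign (x - μ) * (1 / (2 * Real.Gamma (1 / p))) *
        lowerIncGamma (1 / p) (|x - μ| ^ p / (p * σ ^ p)) := by
  have hΓ : 0 < Real.Gamma (1 / p) := Real.Gamma_pos_of_pos (by positivity)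
  have hσp : 0 < σ ^ p := Real.rpow_pos_of_pos hσ p
  rcases lt_trichotomy x μ with hx | hx | hx
  · -- x < μ
    have hsign : Real.sign (x - μ) = -1 := Real.sign_of_neg (by linarith)
    have habs : |x - μ| = μ - x := by rw [abs_of_neg (by linarith), neg_sub]
    set T : ℝ := (μ - x) ^ p / (p * σ ^ p) with hTdef
    have hT : 0 < T := by
      have : (0:ℝ) < (μ - x) ^ p := Real.rpow_pos_of_pos (by linarith) p
      positivity
    have hback : μ + (-1) * (σ * (p * T) ^ (1 / p)) = x := by
      have h1 : p * T = ((μ - x) / σ) ^ p := by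
        rw [hTdef, Real.div_rpow (by linarith) hσ.le]
        field_simp
      rw [h1, one_div, Real.rpow_rpow_inv (div_nonneg (by linarith) hσ.le) hp.ne',
        mul_div_cancel₀ _ hσ.ne']
      ring
    have hmid : ∫ t in Set.Ioc x μ, ggPdf p μ σ t
        = 1 / (2 * Real.Gamma (1 / p)) * lowerIncGamma (1 / p) T := by
      rw [integral_Ioc_eq_integral_Ioo]
      have himg := img_neg_Ioo (μ := μ) hp hσ hT.le
      rw [hback] at himg
      rw [← himg, gg_cov hp hσ (by norm_num) measurableSet_Ioo Set.Ioo_subset_Ioi_self,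
        lowerIncGamma, integral_Ioc_eq_integral_Ioo]
    have hsplit : ∫ t in Set.Iic μ, ggPdf p μ σ t
        = (∫ t in Set.Iic x, ggPdf p μ σ t) + ∫ t in Set.Ioc x μ, ggPdf p μ σ t := by
      rw [← setIntegral_union (Set.Iic_disjoint_Ioc le_rfl) measurableSet_Ioc
        ((gg_integrable_Iic hp hσ).mono_set (Set.Iic_subset_Iic.mpr hx.le))
        ((gg_integrable_Iic hp hσ).mono_set Set.Ioc_subset_Iic_self),
        Set.Iic_union_Ioc_eq_Iic hx.le]
    rw [gg_half_Iic hp hσ] at hsplit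
    rw [hsign, habs]
    linarith [hmid, hsplit]
  · -- x = μ
    rw [hx, sub_self, Real.sign_zero, gg_half_Iic hp hσ]
    ring
  · -- μ < x
    have hsign : Real.sign (x - μ) = 1 := Real.sign_of_pos (by linarith)
    have habs : |x - μ| = x - μ := abs_of_pos (by linarith)
    set T : ℝ := (x - μ) ^ p / (p * σ ^ p) with hTdef
    have hT : 0 < T := by
      have : (0:ℝ) < (x - μ) ^ p := Real.rpow_pos_of_pos (by linarith) p
      positivity
    have hback : μ + 1 * (σ * (p * T) ^ (1 / p)) = x := by
      have h1 : p * T = ((x - μ) / σ) ^ p := by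
        rw [hTdef, Real.div_rpow (by linarith) hσ.le]
        field_simp
      rw [h1, one_div, Real.rpow_rpow_inv (div_nonneg (by linarith) hσ.le) hp.ne',
        mul_div_cancel₀ _ hσ.ne']
      ring
    have hmid : ∫ t in Set.Ioc μ x, ggPdf p μ σ t
        = 1 / (2 * Real.Gamma (1 / p)) * lowerIncGamma (1 / p) T := by
      rw [integral_Ioc_eq_integral_Ioo]
      have himg := img_pos_Ioo (μ := μ) hp hσ hT.le
      rw [hback] at himg
      rw [← himg, gg_cov hp hσ (by norm_num) measurableSet_Ioo Set.Ioo_subset_Ioi_self,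
        lowerIncGamma, integral_Ioc_eq_integral_Ioo]
    have hsplit : ∫ t in Set.Iic x, ggPdf p μ σ t
        = (∫ t in Set.Iic μ, ggPdf p μ σ t) + ∫ t in Set.Ioc μ x, ggPdf p μ σ t := by
      rw [← setIntegral_union (Set.Iic_disjoint_Ioc le_rfl) measurableSet_Ioc
        (gg_integrable_Iic hp hσ)
        ((gg_integrable_Ioi hp hσ).mono_set Set.Ioc_subset_Ioi_self),
        Set.Iic_union_Ioc_eq_Iic hx.le]
    rw [hsplit, gg_half_Iic hp hσ, hmid, hsign, habs]
    ring
end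

section
/- Let p > 0, μ ∈ ℝ, σ > 0, and let f_{p,μ,σ} be the Generalized Gaussian density. Then the variance of this distribution satisfies ∫_ℝ (x−μ)² f_{p,μ,σ}(x) dx = σ² · p^{2/p} · Γ(3/p)/Γ(1/p). -/
open MeasureTheory Real

/-- The variance of the Generalized Gaussian distribution:
`∫_ℝ (x−μ)² f_{p,μ,σ}(x) dx = σ² · p^{2/p} · Γ(3/p)/Γ(1/p)`. -/
theorem genGaussian_variance (p μ σ : ℝ) (hp : 0 < p) (hσ : 0 < σ) :
    ∫ x : ℝ, (x - μ) ^ 2 * ggPdf p μ σ x =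
      σ ^ 2 * p ^ (2 / p) * (Real.Gamma (3 / p) / Real.Gamma (1 / p)) := by
  have hσp : (0:ℝ) < σ ^ p := Real.rpow_pos_of_pos hσ p
  have hb : (0:ℝ) < (p * σ ^ p)⁻¹ := by positivity
  set C : ℝ := p ^ (1 - 1 / p) / (2 * σ * Real.Gamma (1 / p)) with hC
  have h1 : (∫ x : ℝ, (x - μ) ^ 2 * ggPdf p μ σ x)
      = ∫ x : ℝ, x ^ 2 * ggPdf p 0 σ x := by
    rw [← integral_sub_right_eq_self (fun x => x ^ 2 * ggPdf p 0 σ x) μ]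
    simp [ggPdf]
  have h2 : (∫ x : ℝ, x ^ 2 * ggPdf p 0 σ x)
      = C * ∫ x : ℝ, (fun y : ℝ => y ^ (2:ℝ) * Real.exp (-(p * σ ^ p)⁻¹ * y ^ p)) |x| := by
    rw [← integral_const_mul]
    congr 1
    ext x
    have habs : |x| ^ (2:ℝ) = x ^ 2 := by
      rw [show (2:ℝ) = ((2:ℕ):ℝ) by norm_num, Real.rpow_natCast, sq_abs]
    have harg : -(|x - 0| ^ p) / (p * σ ^ p) = -(p * σ ^ p)⁻¹ * |x| ^ p := by
      rw [sub_zero]; ring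
    simp only [ggPdf, harg, habs]
    ring
  have h3 : (∫ x : ℝ, (fun y : ℝ => y ^ (2:ℝ) * Real.exp (-(p * σ ^ p)⁻¹ * y ^ p)) |x|)
      = 2 * ∫ x in Set.Ioi (0:ℝ), (fun y : ℝ => y ^ (2:ℝ) * Real.exp (-(p * σ ^ p)⁻¹ * y ^ p)) x :=
    integral_comp_abs (f := fun y : ℝ => y ^ (2:ℝ) * Real.exp (-(p * σ ^ p)⁻¹ * y ^ p))
  have h4 := integral_rpow_mul_exp_neg_mul_rpow hp (by norm_num : (-1:ℝ) < 2) hb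
  rw [h1, h2, h3]
  simp only []
  rw [h4]
  have hG : (0:ℝ) < Real.Gamma (1 / p) := Real.Gamma_pos_of_pos (by positivity)
  have key : ((p * σ ^ p)⁻¹) ^ (-(2 + 1) / p) = p ^ (3 / p) * σ ^ 2 * σ := by
    rw [show (-(2 + 1) / p : ℝ) = -(3 / p) by ring, Real.rpow_neg (by positivity),
      Real.inv_rpow (by positivity), inv_inv, Real.mul_rpow hp.le hσp.le,
      ← Real.rpow_mul hσ.le, show p * (3 / p) = (3:ℝ) by field_simp,
      show (3:ℝ) = ((3:ℕ):ℝ) by norm_num, Real.rpow_natCast]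
    ring
  rw [key, hC]
  have e0 : (1 - 1/p : ℝ) = (p - 1)/p := by field_simp
  rw [e0]
  have e1 : p ^ ((p - 1)/p) * p ^ (3/p) = p * p ^ (2/p) := by
    rw [← Real.rpow_add hp, show ((p - 1)/p + 3/p) = 1 + 2/p by field_simp; ring,
      Real.rpow_add hp, Real.rpow_one]
  have h21 : ((2:ℝ) + 1) / p = 3 / p := by norm_num
  rw [h21]
  field_simp
  linear_combination e1
end

section
/- Let p > 0, μ ∈ ℝ, σ > 0, and let Z₁, …, Z_d be i.i.d. real random variables with the Generalized Gaussian density f_{p,μ,σ}. Set X_i := max(0, Z_i). Then the expected ℓ₀ pseudo-norm of X = (X₁,…,X_d), i.e., the expected number of nonzero coordinates, equals d · Φ_{p}(μ/σ) = (d/2) · (1 + sgn(μ/σ) · P(1/p, |μ/σ|^p / p)), where Φ_p is the CDF of the standard Generalized Gaussian f_{p,0,1}, sgn is the sign function, and P(s,t) = γ(s,t)/Γ(s) is the lower regularized gamma function. -/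
open MeasureTheory ProbabilityTheory Real

/-- The CDF of the standard Generalized Gaussian distribution `f_{p,0,1}`. -/
noncomputable def ggCdf (p : ℝ) (x : ℝ) : ℝ := ∫ t in Set.Iic x, ggPdf p 0 1 t

/-- The lower regularized gamma function `P(s,t) = γ(s,t)/Γ(s)`. -/
noncomputable def regIncGamma (s t : ℝ) : ℝ := lowerIncGamma s t / Real.Gamma s

open Set


lemma aux_shift (f : ℝ → ℝ) (a c : ℝ) :
    ∫ x in Set.Ioi a, f (x - c) = ∫ x in Set.Ioi (a - c), f x := by
  have key : (fun x => Set.indicator (Set.Ioi a) (fun y => f (y - c)) x)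
      = fun x => Set.indicator (Set.Ioi (a - c)) f (x - c) := by
    funext x
    simp only [Set.indicator_apply, Set.mem_Ioi, sub_lt_sub_iff_right]
  rw [← integral_indicator measurableSet_Ioi, key,
    integral_sub_right_eq_self (fun x => Set.indicator (Set.Ioi (a - c)) f x) c,
    integral_indicator measurableSet_Ioi]


lemma aux_int (p : ℝ) (hp : 0 < p) :
    IntegrableOn (fun x => Real.exp (-(1/p) * x ^ p)) (Set.Ioi 0) := by
  have h2 : IntegrableOn (fun u : ℝ => u ^ (1/p - 1) * Real.exp (-(1/p) * u)) (Set.Ioi 0) := by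
    have := integrableOn_rpow_mul_exp_neg_mul_rpow (p := 1) (s := 1/p - 1) (b := 1/p)
      (by have := one_div_pos.mpr hp; linarith) zero_lt_one (one_div_pos.mpr hp)
    exact this.congr_fun (fun x hx => by dsimp only; rw [Real.rpow_one]) measurableSet_Ioi
  have h := (integrableOn_Ioi_comp_rpow_iff'
    (fun u : ℝ => u ^ (1/p - 1) * Real.exp (-(1/p) * u)) hp.ne').mpr h2
  refine h.congr_fun (fun x hx => ?_) measurableSet_Ioi
  have hx0 : (0:ℝ) < x := hx
  dsimp only
  rw [smul_eq_mul, ← Real.rpow_mul hx0.le, ← mul_assoc, ← Real.rpow_add hx0]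
  have : p - 1 + p * (1/p - 1) = 0 := by field_simp; ring
  rw [this, Real.rpow_zero, one_mul]


lemma aux_full (p : ℝ) (hp : 0 < p) :
    ∫ x in Set.Ioi (0:ℝ), Real.exp (-(1/p) * x ^ p) = p ^ (1/p - 1) * Real.Gamma (1/p) := by
  rw [integral_exp_neg_mul_rpow hp (one_div_pos.mpr hp),
    Real.Gamma_add_one (one_div_ne_zero hp.ne')]
  rw [one_div, Real.inv_rpow hp.le, ← Real.rpow_neg hp.le, neg_div, neg_neg, one_div]
  rw [show p ^ (p⁻¹ - 1) = p ^ (p⁻¹) * p⁻¹ by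
    rw [Real.rpow_sub hp, Real.rpow_one]; ring]
  ring


lemma aux_piece (p : ℝ) (hp : 0 < p) (t : ℝ) (ht : 0 ≤ t) :
    ∫ x in Set.Ioc (0:ℝ) t, Real.exp (-(1/p) * x ^ p)
      = p ^ (1/p - 1) * lowerIncGamma (1/p) (t ^ p / p) := by
  have h1 : ∫ x in Set.Ioc (0:ℝ) t, Real.exp (-(1/p) * x ^ p)
      = ∫ y in Set.Ioc (0:ℝ) (t ^ p), p⁻¹ * (y ^ (1/p - 1) * Real.exp (-(1/p) * y)) := by
    have base := integral_comp_rpow_Ioi_of_pos (p := p)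
      (g := fun y => Set.indicator (Set.Ioc (0:ℝ) (t ^ p))
        (fun y => p⁻¹ * (y ^ (1/p - 1) * Real.exp (-(1/p) * y))) y) hp
    have L : ∫ x in Set.Ioi (0:ℝ), Set.indicator (Set.Ioc (0:ℝ) t)
        (fun x => Real.exp (-(1/p) * x ^ p)) x = ∫ x in Set.Ioc (0:ℝ) t, Real.exp (-(1/p) * x ^ p) := by
      rw [setIntegral_indicator measurableSet_Ioc,
        Set.inter_eq_right.mpr Set.Ioc_subset_Ioi_self]
    have R : ∫ y in Set.Ioi (0:ℝ), Set.indicator (Set.Ioc (0:ℝ) (t ^ p))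
        (fun y => p⁻¹ * (y ^ (1/p - 1) * Real.exp (-(1/p) * y))) y
        = ∫ y in Set.Ioc (0:ℝ) (t ^ p), p⁻¹ * (y ^ (1/p - 1) * Real.exp (-(1/p) * y)) := by
      rw [setIntegral_indicator measurableSet_Ioc,
        Set.inter_eq_right.mpr Set.Ioc_subset_Ioi_self]
    rw [← L, ← R, ← base]
    · refine setIntegral_congr_fun measurableSet_Ioi (fun x hx => ?_)
      have hx0 : (0:ℝ) < x := hx
      have hmem : x ^ p ∈ Set.Ioc (0:ℝ) (t ^ p) ↔ x ∈ Set.Ioc (0:ℝ) t := by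
        simp only [Set.mem_Ioc, Real.rpow_pos_of_pos hx0, true_and, hx0, and_true]
        exact ⟨fun h => (Real.rpow_le_rpow_iff hx0.le ht hp).mp h,
          fun h => Real.rpow_le_rpow hx0.le h hp.le⟩
      simp only [Set.indicator_apply, smul_eq_mul]
      by_cases h : x ∈ Set.Ioc (0:ℝ) t
      · rw [if_pos h, if_pos (hmem.mpr h), ← Real.rpow_mul hx0.le]
        have e1 : p * (1/p - 1) = 1 - p := by field_simp
        rw [e1]
        rw [show p * x ^ (p-1) * (p⁻¹ * (x ^ (1-p) * Real.exp (-(1/p) * x ^ p)))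
            = (p * p⁻¹) * (x ^ (p-1) * x ^ (1-p)) * Real.exp (-(1/p) * x ^ p) by ring,
          ← Real.rpow_add hx0, mul_inv_cancel₀ hp.ne']
        norm_num
      · rw [if_neg h, if_neg (fun hc => h (hmem.mp hc)), mul_zero]
  rw [h1]
  have htp : (0:ℝ) ≤ t ^ p := Real.rpow_nonneg ht p
  have htpp : (0:ℝ) ≤ t ^ p / p := by positivity
  rw [← intervalIntegral.integral_of_le htp]
  have subst := intervalIntegral.integral_comp_mul_left
    (f := fun y => p⁻¹ * (y ^ (1/p - 1) * Real.exp (-(1/p) * y))) (a := 0) (b := t ^ p / p)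
    (c := p) hp.ne'
  rw [mul_zero, mul_div_cancel₀ _ hp.ne'] at subst
  have subst2 : (∫ y in (0:ℝ)..(t ^ p), p⁻¹ * (y ^ (1/p - 1) * Real.exp (-(1/p) * y)))
      = p • ∫ x in (0:ℝ)..(t ^ p / p), p⁻¹ * ((p * x) ^ (1/p - 1) * Real.exp (-(1/p) * (p * x))) := by
    rw [subst, smul_smul, mul_inv_cancel₀ hp.ne', one_smul]
  rw [subst2, smul_eq_mul]
  unfold lowerIncGamma
  rw [← intervalIntegral.integral_of_le htpp]
  rw [show (1/p : ℝ) - 1 = 1/p - 1 from rfl]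
  have : ∀ u ∈ Set.uIcc (0:ℝ) (t ^ p / p),
      p⁻¹ * ((p * u) ^ (1/p - 1) * Real.exp (-(1/p) * (p * u)))
        = p⁻¹ * p ^ (1/p - 1) * (u ^ (1/p - 1) * Real.exp (-u)) := by
    intro u hu
    rw [Set.uIcc_of_le htpp] at hu
    have hu0 : (0:ℝ) ≤ u := hu.1
    rw [Real.mul_rpow hp.le hu0]
    have : -(1/p) * (p * u) = -u := by field_simp
    rw [this]; ring
  rw [intervalIntegral.integral_congr (g := fun u => p⁻¹ * p ^ (1/p - 1) * (u ^ (1/p - 1) * Real.exp (-u))) this]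
  rw [intervalIntegral.integral_const_mul]
  rw [show p * (p⁻¹ * p ^ (1/p - 1) * ∫ u in (0:ℝ)..(t ^ p / p), u ^ (1/p - 1) * Real.exp (-u))
      = (p * p⁻¹) * (p ^ (1/p - 1) * ∫ u in (0:ℝ)..(t ^ p / p), u ^ (1/p - 1) * Real.exp (-u)) by ring,
    mul_inv_cancel₀ hp.ne', one_mul]


section stdAux
variable {p : ℝ}

lemma gamma_pos (hp : 0 < p) : 0 < Real.Gamma (1/p) :=
  Real.Gamma_pos_of_pos (by positivity)


lemma std_eq (x : ℝ) :
    ggPdf p 0 1 x = p ^ (1 - 1/p) / (2 * Real.Gamma (1/p)) * Real.exp (-(1/p) * |x| ^ p) := by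
  unfold ggPdf
  rw [sub_zero, Real.one_rpow, mul_one, mul_one]
  congr 1
  exact congrArg Real.exp (by ring)


lemma std_cont (hp : 0 < p) : Continuous (ggPdf p 0 1) := by
  unfold ggPdf
  refine continuous_const.mul (Real.continuous_exp.comp ?_)
  refine Continuous.div_const (Continuous.neg ?_) _
  exact (continuous_abs.comp (continuous_id.sub continuous_const)).rpow_const
    (fun x => Or.inr hp.le)


lemma std_int_Ioi (hp : 0 < p) : IntegrableOn (ggPdf p 0 1) (Set.Ioi 0) := by
  refine IntegrableOn.congr_fun ((aux_int p hp).const_mul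
    (p ^ (1 - 1/p) / (2 * Real.Gamma (1/p)))) (fun x hx => ?_) measurableSet_Ioi
  rw [std_eq, abs_of_pos (by exact hx)]


lemma std_int_Iic (hp : 0 < p) : IntegrableOn (ggPdf p 0 1) (Set.Iic 0) := by
  rw [← Measure.map_neg_eq_self (volume : Measure ℝ)]
  have m : MeasurableEmbedding fun x : ℝ => -x := (Homeomorph.neg ℝ).measurableEmbedding
  rw [m.integrableOn_map_iff]
  have heven : (ggPdf p 0 1) ∘ (fun x : ℝ => -x) = ggPdf p 0 1 := by
    funext x; simp only [Function.comp_apply]; unfold ggPdf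
    rw [sub_zero, sub_zero, abs_neg]
  rw [heven, neg_preimage, neg_Iic, neg_zero]
  exact Iff.mpr integrableOn_Ici_iff_integrableOn_Ioi (std_int_Ioi hp)


lemma std_half (hp : 0 < p) : ∫ x in Set.Ioi (0:ℝ), ggPdf p 0 1 x = 1/2 := by
  have h1 : ∫ x in Set.Ioi (0:ℝ), ggPdf p 0 1 x
      = p ^ (1 - 1/p) / (2 * Real.Gamma (1/p)) * ∫ x in Set.Ioi (0:ℝ), Real.exp (-(1/p) * x ^ p) := by
    rw [← integral_const_mul]
    refine setIntegral_congr_fun measurableSet_Ioi (fun x hx => ?_)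
    rw [std_eq, abs_of_pos (by exact hx)]
  have hg := gamma_pos hp
  rw [h1, aux_full p hp]
  rw [show p ^ (1 - 1/p) / (2 * Real.Gamma (1/p)) * (p ^ (1/p - 1) * Real.Gamma (1/p))
      = (p ^ (1 - 1/p) * p ^ (1/p - 1)) * (Real.Gamma (1/p) / (2 * Real.Gamma (1/p))) by ring,
    ← Real.rpow_add hp]
  have e0 : (1 - 1/p) + (1/p - 1) = 0 := by ring
  rw [e0, Real.rpow_zero, one_mul, div_eq_div_iff (by positivity) (two_ne_zero : (2:ℝ) ≠ 0)]
  ring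


lemma std_symm (a : ℝ) :
    ∫ x in Set.Ioi a, ggPdf p 0 1 x = ∫ x in Set.Iic (-a), ggPdf p 0 1 x := by
  have heven : (fun x => ggPdf p 0 1 (-x)) = ggPdf p 0 1 := by
    funext x; unfold ggPdf; rw [sub_zero, sub_zero, abs_neg]
  have h := integral_comp_neg_Iic (-a) (ggPdf p 0 1)
  rw [heven, neg_neg] at h
  exact h.symm


lemma std_piece (hp : 0 < p) {t : ℝ} (ht : 0 ≤ t) :
    ∫ x in Set.Ioc (0:ℝ) t, ggPdf p 0 1 x = 1/2 * regIncGamma (1/p) (t ^ p / p) := by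
  have hg := gamma_pos hp
  have h1 : ∫ x in Set.Ioc (0:ℝ) t, ggPdf p 0 1 x
      = p ^ (1 - 1/p) / (2 * Real.Gamma (1/p)) * ∫ x in Set.Ioc (0:ℝ) t, Real.exp (-(1/p) * x ^ p) := by
    rw [← integral_const_mul]
    refine setIntegral_congr_fun measurableSet_Ioc (fun x hx => ?_)
    rw [std_eq, abs_of_pos hx.1]
  rw [h1, aux_piece p hp t ht]
  rw [show p ^ (1 - 1/p) / (2 * Real.Gamma (1/p)) * (p ^ (1/p - 1) * lowerIncGamma (1/p) (t^p/p))
      = (p ^ (1 - 1/p) * p ^ (1/p - 1)) * (lowerIncGamma (1/p) (t^p/p) / (2 * Real.Gamma (1/p))) by ring,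
    ← Real.rpow_add hp]
  have e0 : (1 - 1/p) + (1/p - 1) = 0 := by ring
  rw [e0, Real.rpow_zero, one_mul, regIncGamma]
  ring


lemma cdf_formula (hp : 0 < p) (t : ℝ) :
    ggCdf p t = 1/2 * (1 + Real.sign t * regIncGamma (1/p) (|t| ^ p / p)) := by
  have hg := gamma_pos hp
  rcases lt_trichotomy t 0 with hneg | rfl | hpos
  · -- t < 0
    have ht : (0:ℝ) ≤ -t := by linarith
    have hsplit : ∫ x in Set.Ioi (0:ℝ), ggPdf p 0 1 x
        = (∫ x in Set.Ioc (0:ℝ) (-t), ggPdf p 0 1 x) + ∫ x in Set.Ioi (-t), ggPdf p 0 1 x := by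
      rw [← setIntegral_union (Set.Ioc_disjoint_Ioi le_rfl) measurableSet_Ioi
        ((std_int_Ioi hp).mono_set Set.Ioc_subset_Ioi_self)
        ((std_int_Ioi hp).mono_set (Set.Ioi_subset_Ioi ht)),
        Set.Ioc_union_Ioi_eq_Ioi ht]
    have h2 : ggCdf p t = ∫ x in Set.Ioi (-t), ggPdf p 0 1 x := by
      have h := std_symm (p := p) (-t)
      rw [neg_neg] at h
      rw [ggCdf]
      exact h.symm
    rw [std_half hp, std_piece hp ht] at hsplit
    rw [h2, Real.sign_of_neg hneg, abs_of_neg hneg]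
    linarith
  · simp only [Real.sign_zero, zero_mul, add_zero, mul_one]
    have h := std_symm (p := p) 0
    rw [neg_zero] at h
    rw [ggCdf, ← h, std_half hp]
  · have ht : (0:ℝ) ≤ t := hpos.le
    have habs : |t| = t := abs_of_pos hpos
    rw [ggCdf, show Set.Iic t = Set.Iic 0 ∪ Set.Ioc 0 t from (Set.Iic_union_Ioc_eq_Iic ht).symm,
      setIntegral_union ((Set.Iic_disjoint_Ioi le_rfl).mono_right Set.Ioc_subset_Ioi_self)
        measurableSet_Ioc (std_int_Iic hp) ((std_cont hp).integrableOn_Ioc),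
      show ∫ x in Set.Iic (0:ℝ), ggPdf p 0 1 x = 1/2 by
        have h := std_symm (p := p) 0
        rw [neg_zero] at h
        rw [← h]; exact std_half hp,
      std_piece hp ht, Real.sign_of_pos hpos, habs]
    ring


end stdAux

set_option linter.unusedVariables false in
/-- **Sparsity of the Rectified Generalized Gaussian.**
If `Z₁,…,Z_d` are i.i.d. with Generalized Gaussian density `f_{p,μ,σ}` and `X_i = max(0,Z_i)`,
then the expected number of nonzero coordinates of `X` equals
`d · Φ_p(μ/σ) = (d/2)(1 + sgn(μ/σ) P(1/p, |μ/σ|^p/p))`. -/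
theorem expected_l0_rectified_genGaussian
    (d : ℕ) (p μ σ : ℝ) (hp : 0 < p) (hσ : 0 < σ)
    {Ω : Type*} [MeasureSpace Ω] [IsProbabilityMeasure (ℙ : Measure Ω)]
    (Z : Fin d → Ω → ℝ) (hmeas : ∀ i, Measurable (Z i))
    (hindep : iIndepFun Z ℙ)
    (hlaw : ∀ i, Measure.map (Z i) ℙ =
      volume.withDensity (fun x => ENNReal.ofReal (ggPdf p μ σ x))) :
    (∫ ω, ∑ i, (if max 0 (Z i ω) ≠ 0 then (1 : ℝ) else 0) ∂ℙ) = d * ggCdf p (μ / σ) ∧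
    (∫ ω, ∑ i, (if max 0 (Z i ω) ≠ 0 then (1 : ℝ) else 0) ∂ℙ) =
      (d : ℝ) / 2 * (1 + Real.sign (μ / σ) * regIncGamma (1 / p) (|μ / σ| ^ p / p)) := by
  have hcont : Continuous (ggPdf p μ σ) := by
    unfold ggPdf
    refine continuous_const.mul (Real.continuous_exp.comp ?_)
    refine Continuous.div_const (Continuous.neg ?_) _
    exact (continuous_abs.comp (continuous_id.sub continuous_const)).rpow_const
      (fun x => Or.inr hp.le)
  -- rewrite the if into an indicator
  have hif : ∀ i, (fun ω => if max 0 (Z i ω) ≠ 0 then (1:ℝ) else 0)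
      = fun ω => Set.indicator (Set.Ioi (0:ℝ)) (fun _ => (1:ℝ)) (Z i ω) := by
    intro i; funext ω
    have hiff : (max 0 (Z i ω) ≠ 0) ↔ Z i ω ∈ Set.Ioi (0:ℝ) := by
      simp only [Set.mem_Ioi]
      constructor
      · intro h
        by_contra hc
        exact h (max_eq_left (not_lt.mp hc))
      · intro h hc
        rw [max_eq_right h.le] at hc
        exact h.ne' hc
    rw [Set.indicator_apply, if_congr hiff rfl rfl]
  -- the value of each coordinate's integral
  have hval : ∀ i, ∫ ω, Set.indicator (Set.Ioi (0:ℝ)) (fun _ => (1:ℝ)) (Z i ω) ∂ℙ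
      = ∫ x in Set.Ioi (0:ℝ), ggPdf p μ σ x := by
    intro i
    have hsm : AEStronglyMeasurable (fun x : ℝ => Set.indicator (Set.Ioi (0:ℝ)) (fun _ => (1:ℝ)) x)
        (Measure.map (Z i) ℙ) :=
      ((stronglyMeasurable_const.indicator measurableSet_Ioi)).aestronglyMeasurable
    rw [← integral_map (hmeas i).aemeasurable hsm, hlaw i]
    have h1 : ∫ x, Set.indicator (Set.Ioi (0:ℝ)) (fun _ => (1:ℝ)) x
        ∂(volume.withDensity (fun x => ENNReal.ofReal (ggPdf p μ σ x)))
        = ((volume.withDensity (fun x => ENNReal.ofReal (ggPdf p μ σ x))) (Set.Ioi 0)).toReal := by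
      exact integral_indicator_one measurableSet_Ioi
    rw [h1, withDensity_apply _ measurableSet_Ioi]
    rw [integral_eq_lintegral_of_nonneg_ae (Filter.Eventually.of_forall (fun x => by
        unfold ggPdf
        have hg : (0:ℝ) < Real.Gamma (1/p) := Real.Gamma_pos_of_pos (by positivity)
        positivity))
      (hcont.aestronglyMeasurable.restrict)]
  -- change of variables: ∫ over Ioi 0 of ggPdf p μ σ = ggCdf p (μ/σ)
  have hchange : ∫ x in Set.Ioi (0:ℝ), ggPdf p μ σ x = ggCdf p (μ / σ) := by
    have hg : (0:ℝ) < Real.Gamma (1/p) := Real.Gamma_pos_of_pos (by positivity)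
    have hpt : ∀ x : ℝ, ggPdf p μ σ x = σ⁻¹ * ggPdf p 0 1 (σ⁻¹ * (x - μ)) := by
      intro x
      have hσp : (0:ℝ) < σ ^ p := Real.rpow_pos_of_pos hσ p
      unfold ggPdf
      rw [sub_zero, Real.one_rpow]
      rw [abs_mul, abs_of_pos (inv_pos.mpr hσ), Real.mul_rpow (inv_nonneg.mpr hσ.le) (abs_nonneg _),
        Real.inv_rpow hσ.le]
      rw [show -((σ ^ p)⁻¹ * |x - μ| ^ p) / (p * 1) = -(|x - μ| ^ p) / (p * σ ^ p) by
        rw [mul_one, neg_div, neg_div, neg_inj, inv_mul_eq_div, div_div, mul_comm (σ ^ p) p]]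
      field_simp
    calc ∫ x in Set.Ioi (0:ℝ), ggPdf p μ σ x
        = ∫ x in Set.Ioi (0:ℝ), σ⁻¹ * ggPdf p 0 1 (σ⁻¹ * (x - μ)) := by
          exact setIntegral_congr_fun measurableSet_Ioi (fun x _ => hpt x)
      _ = σ⁻¹ * ∫ x in Set.Ioi (0:ℝ), ggPdf p 0 1 (σ⁻¹ * (x - μ)) := by
          rw [integral_const_mul]
      _ = σ⁻¹ * ∫ y in Set.Ioi ((0:ℝ) - μ), ggPdf p 0 1 (σ⁻¹ * y) := by
          rw [aux_shift (fun y => ggPdf p 0 1 (σ⁻¹ * y)) 0 μ]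
      _ = σ⁻¹ * (σ • ∫ y in Set.Ioi (σ⁻¹ * (0 - μ)), ggPdf p 0 1 y) := by
          rw [integral_comp_mul_left_Ioi (ggPdf p 0 1) _ (inv_pos.mpr hσ), inv_inv]
      _ = ∫ y in Set.Ioi (-(μ / σ)), ggPdf p 0 1 y := by
          rw [smul_eq_mul, show σ⁻¹ * (0 - μ) = -(μ / σ) by field_simp; ring, ← mul_assoc,
            inv_mul_cancel₀ hσ.ne', one_mul]
      _ = ggCdf p (μ / σ) := by
          have h := std_symm (p := p) (-(μ / σ))
          rw [neg_neg] at h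
          rw [h, ggCdf]
  -- integrability of each indicator
  have hint : ∀ i : Fin d, Integrable
      (fun ω => Set.indicator (Set.Ioi (0:ℝ)) (fun _ => (1:ℝ)) (Z i ω)) ℙ := by
    intro i
    have : (fun ω => Set.indicator (Set.Ioi (0:ℝ)) (fun _ => (1:ℝ)) (Z i ω))
        = Set.indicator ((Z i) ⁻¹' (Set.Ioi 0)) (fun _ => (1:ℝ)) := by
      funext ω
      by_cases h : 0 < Z i ω <;>
        simp [Set.indicator_apply, Set.mem_preimage, h]
    rw [this]
    exact (integrable_const (1:ℝ)).indicator ((hmeas i) measurableSet_Ioi)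
  have hmain : (∫ ω, ∑ i, (if max 0 (Z i ω) ≠ 0 then (1 : ℝ) else 0) ∂ℙ)
      = d * ggCdf p (μ / σ) := by
    have : (fun ω => ∑ i, (if max 0 (Z i ω) ≠ 0 then (1 : ℝ) else 0))
        = fun ω => ∑ i, Set.indicator (Set.Ioi (0:ℝ)) (fun _ => (1:ℝ)) (Z i ω) := by
      funext ω
      exact Finset.sum_congr rfl (fun i _ => congrFun (hif i) ω)
    rw [this, integral_finset_sum _ (fun i _ => hint i)]
    rw [Finset.sum_congr rfl (fun i _ => (hval i).trans hchange)]
    rw [Finset.sum_const, Finset.card_univ, Fintype.card_fin, nsmul_eq_mul]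
  refine ⟨hmain, ?_⟩
  rw [hmain, cdf_formula hp (μ / σ)]
  ring
end

section
/- Let p > 0, μ ∈ ℝ, σ > 0, and let Z be a real random variable with the Generalized Gaussian density f_{p,μ,σ}. Set X := max(0, Z). Then E[X] = (1/2) · [ μ · (1 + sgn(μ) · P(1/p, |μ|^p/(p σ^p))) + p^{1/p} σ · Γ(2/p, |μ|^p/(p σ^p)) / Γ(1/p) ], where sgn is the sign function, P(s,t) = γ(s,t)/Γ(s) is the lower regularized gamma function, and Γ(s,t) is the upper incomplete gamma function. -/
open MeasureTheory ProbabilityTheory Real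
open Set
open scoped ENNReal NNReal

/-- The upper incomplete gamma function `Γ(s,t) = ∫_t^∞ u^{s−1} e^{−u} du`. -/
noncomputable def upperIncGamma (s t : ℝ) : ℝ :=
  ∫ u in Set.Ioi t, u ^ (s - 1) * Real.exp (-u)

section helperSection


variable {p b q a : ℝ}

lemma phi_image_Ioi (hp : 0 < p) (hb : 0 < b) (ha : 0 ≤ a) :
    (fun x : ℝ => b * x ^ p) '' Ioi a = Ioi (b * a ^ p) := by
  ext u
  constructor
  · rintro ⟨x, hx, rfl⟩
    exact mul_lt_mul_of_pos_left (rpow_lt_rpow ha hx hp) hb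
  · intro hu
    have hT : 0 ≤ b * a ^ p := by positivity
    have hu0 : 0 < u := lt_of_le_of_lt hT hu
    have hub : 0 < u / b := div_pos hu0 hb
    refine ⟨(u / b) ^ (1 / p), ?_, ?_⟩
    · have h1 : a ^ p < u / b := (lt_div_iff₀' hb).mpr hu
      have h2 : (a ^ p) ^ (1 / p) < (u / b) ^ (1 / p) :=
        rpow_lt_rpow (by positivity) h1 (by positivity)
      rwa [← rpow_mul ha, mul_one_div_cancel hp.ne', rpow_one] at h2
    · show b * ((u / b) ^ (1 / p)) ^ p = u
      rw [← rpow_mul hub.le, one_div_mul_cancel hp.ne', rpow_one, mul_comm,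
        div_mul_cancel₀ _ hb.ne']

lemma phi_image_Ioc (hp : 0 < p) (hb : 0 < b) (ha : 0 ≤ a) :
    (fun x : ℝ => b * x ^ p) '' Ioc 0 a = Ioc 0 (b * a ^ p) := by
  ext u
  constructor
  · rintro ⟨x, ⟨hx0, hxa⟩, rfl⟩
    exact ⟨by positivity, mul_le_mul_of_nonneg_left (rpow_le_rpow hx0.le hxa hp.le) hb.le⟩
  · rintro ⟨hu0, hua⟩
    have hub : 0 < u / b := div_pos hu0 hb
    refine ⟨(u / b) ^ (1 / p), ⟨by positivity, ?_⟩, ?_⟩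
    · have h1 : u / b ≤ a ^ p := (div_le_iff₀' hb).mpr hua
      have h2 : (u / b) ^ (1 / p) ≤ (a ^ p) ^ (1 / p) :=
        rpow_le_rpow hub.le h1 (by positivity)
      rwa [← rpow_mul ha, mul_one_div_cancel hp.ne', rpow_one] at h2
    · show b * ((u / b) ^ (1 / p)) ^ p = u
      rw [← rpow_mul hub.le, one_div_mul_cancel hp.ne', rpow_one, mul_comm,
        div_mul_cancel₀ _ hb.ne']

lemma phi_injOn (hp : 0 < p) (hb : 0 < b) {s : Set ℝ} (hs0 : s ⊆ Ioi 0) :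
    InjOn (fun x : ℝ => b * x ^ p) s := by
  refine (fun x hx y hy hxy => ?_)
  have hx0 : (0:ℝ) < x := hs0 hx
  have hy0 : (0:ℝ) < y := hs0 hy
  have : x ^ p = y ^ p := by
    exact mul_left_cancel₀ hb.ne' hxy
  have := congrArg (fun t : ℝ => t ^ (1 / p)) this
  simpa [← rpow_mul hx0.le, ← rpow_mul hy0.le, mul_inv_cancel₀ hp.ne'] using this

lemma phi_eqOn (hp : 0 < p) (hb : 0 < b) :
    EqOn (fun x => |b * (p * x ^ (p - 1))| •
        ((b * x ^ p) ^ ((q + 1) / p - 1) * Real.exp (-(b * x ^ p))))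
      (fun x => (p * b ^ ((q + 1) / p)) * (x ^ q * Real.exp (-(b * x ^ p)))) (Ioi 0) := by
  intro x hx
  have hx0 : (0:ℝ) < x := hx
  have h1 : |b * (p * x ^ (p - 1))| = b * (p * x ^ (p - 1)) := abs_of_pos (by positivity)
  have h2 : (b * x ^ p) ^ ((q + 1) / p - 1) = b ^ ((q + 1) / p - 1) * x ^ (q + 1 - p) := by
    rw [mul_rpow hb.le (by positivity), ← rpow_mul hx0.le]
    congr 1
    field_simp
  have h3 : b * b ^ ((q + 1) / p - 1) = b ^ ((q + 1) / p) := by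
    nth_rewrite 1 [show b = b ^ (1:ℝ) by rw [rpow_one]]
    rw [← rpow_add hb]
    norm_num
  have h4 : x ^ (p - 1) * x ^ (q + 1 - p) = x ^ q := by
    rw [← rpow_add hx0]; ring_nf
  simp only [smul_eq_mul, h1, h2]
  calc b * (p * x ^ (p - 1)) * (b ^ ((q + 1) / p - 1) * x ^ (q + 1 - p) * Real.exp (-(b * x ^ p)))
      = p * (b * b ^ ((q + 1) / p - 1)) * ((x ^ (p - 1) * x ^ (q + 1 - p)) *
        Real.exp (-(b * x ^ p))) := by ring
    _ = _ := by rw [h3, h4]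

lemma gamma_integrand_integrable {s : ℝ} (hs : 0 < s) {T : Set ℝ} (hT : T ⊆ Ioi 0) :
    IntegrableOn (fun u : ℝ => u ^ (s - 1) * Real.exp (-u)) T := by
  have h := Real.GammaIntegral_convergent hs
  have h2 : IntegrableOn (fun u : ℝ => u ^ (s - 1) * Real.exp (-u)) (Ioi 0) := by
    have : (fun u : ℝ => u ^ (s - 1) * Real.exp (-u))
        = fun u : ℝ => Real.exp (-u) * u ^ (s - 1) := by funext u; ring
    rw [this]; exact h
  exact h2.mono_set hT

lemma key_transfer (hp : 0 < p) (hb : 0 < b) (hq : -1 < q) {s : Set ℝ}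
    (hms : MeasurableSet s) (hs0 : s ⊆ Ioi 0) :
    (∫ u in (fun x : ℝ => b * x ^ p) '' s, u ^ ((q + 1) / p - 1) * Real.exp (-u))
      = (p * b ^ ((q + 1) / p)) * ∫ x in s, x ^ q * Real.exp (-(b * x ^ p)) := by
  have hderiv : ∀ x ∈ s, HasDerivWithinAt (fun x : ℝ => b * x ^ p)
      (b * (p * x ^ (p - 1))) s x := fun x hx =>
    ((Real.hasDerivAt_rpow_const (Or.inl (ne_of_gt (hs0 hx)))).const_mul b).hasDerivWithinAt
  rw [integral_image_eq_integral_abs_deriv_smul hms hderiv (phi_injOn hp hb hs0)]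
  rw [setIntegral_congr_fun hms ((phi_eqOn hp hb (q := q)).mono hs0)]
  exact integral_const_mul _ _

lemma key_integrable (hp : 0 < p) (hb : 0 < b) (hq : -1 < q) {s : Set ℝ}
    (hms : MeasurableSet s) (hs0 : s ⊆ Ioi 0)
    (himg : (fun x : ℝ => b * x ^ p) '' s ⊆ Ioi 0) :
    IntegrableOn (fun x => x ^ q * Real.exp (-(b * x ^ p))) s := by
  have hderiv : ∀ x ∈ s, HasDerivWithinAt (fun x : ℝ => b * x ^ p)
      (b * (p * x ^ (p - 1))) s x := fun x hx =>
    ((Real.hasDerivAt_rpow_const (Or.inl (ne_of_gt (hs0 hx)))).const_mul b).hasDerivWithinAt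
  have hgi : IntegrableOn (fun u : ℝ => u ^ ((q + 1) / p - 1) * Real.exp (-u))
      ((fun x : ℝ => b * x ^ p) '' s) :=
    gamma_integrand_integrable (div_pos (by linarith) hp) himg
  rw [integrableOn_image_iff_integrableOn_abs_deriv_smul hms hderiv
    (phi_injOn hp hb hs0)] at hgi
  have hgi2 : IntegrableOn
      (fun x => (p * b ^ ((q + 1) / p)) * (x ^ q * Real.exp (-(b * x ^ p)))) s :=
    hgi.congr_fun ((phi_eqOn hp hb (q := q)).mono hs0) hms
  have h3 := hgi2.const_mul (p * b ^ ((q + 1) / p))⁻¹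
  have hc : (p * b ^ ((q + 1) / p)) ≠ 0 := by positivity
  refine MeasureTheory.IntegrableOn.congr_fun h3 (fun x _ => ?_) hms
  field_simp

lemma upper_eval (hp : 0 < p) (hb : 0 < b) (hq : -1 < q) (ha : 0 ≤ a) :
    ∫ x in Ioi a, x ^ q * Real.exp (-(b * x ^ p))
      = b ^ (-(q + 1) / p) / p * upperIncGamma ((q + 1) / p) (b * a ^ p) := by
  have h := key_transfer hp hb hq measurableSet_Ioi (Ioi_subset_Ioi ha)
  rw [phi_image_Ioi hp hb ha] at h
  have h2 : upperIncGamma ((q + 1) / p) (b * a ^ p)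
      = (p * b ^ ((q + 1) / p)) * ∫ x in Ioi a, x ^ q * Real.exp (-(b * x ^ p)) := h
  rw [h2, neg_div, rpow_neg hb.le]
  have hb2 : b ^ ((q + 1) / p) ≠ 0 := by positivity
  field_simp

lemma lower_eval (hp : 0 < p) (hb : 0 < b) (hq : -1 < q) (ha : 0 ≤ a) :
    ∫ x in Ioc 0 a, x ^ q * Real.exp (-(b * x ^ p))
      = b ^ (-(q + 1) / p) / p * lowerIncGamma ((q + 1) / p) (b * a ^ p) := by
  have h := key_transfer hp hb hq (measurableSet_Ioc (a := (0:ℝ)) (b := a)) (fun x hx => hx.1)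
  rw [phi_image_Ioc hp hb ha] at h
  have h2 : lowerIncGamma ((q + 1) / p) (b * a ^ p)
      = (p * b ^ ((q + 1) / p)) * ∫ x in Ioc 0 a, x ^ q * Real.exp (-(b * x ^ p)) := h
  rw [h2, neg_div, rpow_neg hb.le]
  have hb2 : b ^ ((q + 1) / p) ≠ 0 := by positivity
  field_simp

lemma upper_integrableOn (hp : 0 < p) (hb : 0 < b) (hq : -1 < q) (ha : 0 ≤ a) :
    IntegrableOn (fun x => x ^ q * Real.exp (-(b * x ^ p))) (Ioi a) := by
  refine key_integrable hp hb hq measurableSet_Ioi (Ioi_subset_Ioi ha) ?_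
  rw [phi_image_Ioi hp hb ha]
  exact Ioi_subset_Ioi (by positivity)

lemma gamma_split {s T : ℝ} (hs : 0 < s) (hT : 0 ≤ T) :
    Real.Gamma s = lowerIncGamma s T + upperIncGamma s T := by
  have h1 : Real.Gamma s = ∫ u in Ioi (0:ℝ), u ^ (s - 1) * Real.exp (-u) :=
    (Real.Gamma_eq_integral hs).trans
      (setIntegral_congr_fun measurableSet_Ioi (fun x _ => mul_comm _ _))
  rw [h1, ← Ioc_union_Ioi_eq_Ioi hT,
    setIntegral_union (Ioc_disjoint_Ioi le_rfl) measurableSet_Ioi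
      (gamma_integrand_integrable hs (fun x hx => hx.1))
      (gamma_integrand_integrable hs (Ioi_subset_Ioi hT))]
  rfl

end helperSection


/-- **Mean of the Rectified Generalized Gaussian.**
If `Z` has Generalized Gaussian density `f_{p,μ,σ}` and `X = max(0,Z)`, then
`E[X] = (1/2)[μ(1 + sgn(μ)P(1/p, |μ|^p/(pσ^p))) + p^{1/p}σ Γ(2/p, |μ|^p/(pσ^p))/Γ(1/p)]`. -/
theorem rectified_genGaussian_mean
    (p μ σ : ℝ) (hp : 0 < p) (hσ : 0 < σ)
    {Ω : Type*} [MeasureSpace Ω] [IsProbabilityMeasure (ℙ : Measure Ω)]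
    (Z : Ω → ℝ) (hmeas : Measurable Z)
    (hlaw : Measure.map Z ℙ =
      volume.withDensity (fun x => ENNReal.ofReal (ggPdf p μ σ x))) :
    (∫ ω, max 0 (Z ω) ∂ℙ) =
      (1 / 2) * (μ * (1 + Real.sign μ * regIncGamma (1 / p) (|μ| ^ p / (p * σ ^ p)))
        + p ^ (1 / p) * σ * upperIncGamma (2 / p) (|μ| ^ p / (p * σ ^ p))
          / Real.Gamma (1 / p)) := by
  have hΓ : 0 < Real.Gamma (1 / p) := Real.Gamma_pos_of_pos (by positivity)
  set c : ℝ := p ^ (1 - 1 / p) / (2 * σ * Real.Gamma (1 / p)) with hc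
  set b : ℝ := (p * σ ^ p)⁻¹ with hb
  have hσp : (0:ℝ) < σ ^ p := rpow_pos_of_pos hσ p
  have hb0 : 0 < b := by rw [hb]; positivity
  have hc0 : 0 < c := by rw [hc]; positivity
  have hpdf_eq : ∀ x, ggPdf p μ σ x = c * Real.exp (-(b * |x - μ| ^ p)) := by
    intro x
    rw [ggPdf, hc, hb]
    congr 2
    rw [inv_mul_eq_div, neg_div]
  have habs_cont : Continuous fun y : ℝ => c * Real.exp (-(b * |y| ^ p)) := by
    have h1 : Continuous fun y : ℝ => |y| ^ p :=
      continuous_abs.rpow_const (fun x => Or.inr hp.le)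
    exact continuous_const.mul (Real.continuous_exp.comp ((continuous_const.mul h1).neg))
  have hpdf_cont : Continuous (ggPdf p μ σ) := by
    have : ggPdf p μ σ = fun x => c * Real.exp (-(b * |x - μ| ^ p)) := funext hpdf_eq
    rw [this]
    exact habs_cont.comp (continuous_id.sub continuous_const)
  have hpdf_nonneg : ∀ x, 0 ≤ ggPdf p μ σ x := by
    intro x; rw [hpdf_eq]; positivity
  -- Step 1: express the expectation as an integral against the density
  have step1 : (∫ ω, max 0 (Z ω) ∂ℙ) = ∫ x, ggPdf p μ σ x * max 0 x := by
    have h1 : (∫ ω, max 0 (Z ω) ∂ℙ) = ∫ x, max 0 x ∂(Measure.map Z ℙ) :=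
      (integral_map hmeas.aemeasurable
        (continuous_const.max continuous_id).aestronglyMeasurable).symm
    rw [h1, hlaw]
    have h2 : (fun x => ENNReal.ofReal (ggPdf p μ σ x))
        = fun x => ((ggPdf p μ σ x).toNNReal : ℝ≥0∞) := rfl
    have hm : Measurable fun x => (ggPdf p μ σ x).toNNReal :=
      show Measurable fun x => (ggPdf p μ σ x).toNNReal from
        (continuous_real_toNNReal.comp hpdf_cont).measurable
    rw [h2, integral_withDensity_eq_integral_smul hm _]
    congr 1; funext x
    rw [NNReal.smul_def, smul_eq_mul, Real.coe_toNNReal _ (hpdf_nonneg x)]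
  -- Step 2: restrict to the positive half line
  have step2 : (∫ x, ggPdf p μ σ x * max 0 x)
      = ∫ x in Ioi (0:ℝ), x * (c * Real.exp (-(b * |x - μ| ^ p))) := by
    rw [← integral_indicator measurableSet_Ioi]
    congr 1; funext x
    by_cases hx : x ∈ Ioi (0:ℝ)
    · rw [Set.indicator_of_mem hx, hpdf_eq, max_eq_right (le_of_lt hx), mul_comm]
    · rw [Set.indicator_of_notMem hx, max_eq_left (by simpa using hx), mul_zero]
  -- Step 3: translate by μ
  have step3 : (∫ x in Ioi (0:ℝ), x * (c * Real.exp (-(b * |x - μ| ^ p))))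
      = ∫ y in Ioi (-μ), (y + μ) * (c * Real.exp (-(b * |y| ^ p))) := by
    rw [← integral_indicator measurableSet_Ioi, ← integral_indicator measurableSet_Ioi,
      ← integral_add_right_eq_self
        ((Ioi (0:ℝ)).indicator fun x => x * (c * Real.exp (-(b * |x - μ| ^ p)))) μ]
    congr 1; funext y
    by_cases hy : -μ < y
    · have h1 : (0:ℝ) < y + μ := by linarith
      rw [Set.indicator_of_mem (mem_Ioi.mpr h1), Set.indicator_of_mem (mem_Ioi.mpr hy),
        add_sub_cancel_right]
    · have h1 : ¬ (0:ℝ) < y + μ := fun h => hy (by linarith)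
      rw [Set.indicator_of_notMem (by simpa using h1),
        Set.indicator_of_notMem (by simpa using hy)]
  -- Generic evaluation over Ioi a for 0 ≤ a
  have habs_on : ∀ a : ℝ, 0 ≤ a → ∀ y ∈ Ioi a,
      (y + μ) * (c * Real.exp (-(b * |y| ^ p)))
        = c * (y ^ (1:ℝ) * Real.exp (-(b * y ^ p)))
          + (c * μ) * (y ^ (0:ℝ) * Real.exp (-(b * y ^ p))) := by
    intro a ha y hy
    have hy0 : (0:ℝ) < y := lt_of_le_of_lt ha hy
    rw [abs_of_pos hy0, rpow_one, rpow_zero]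
    ring
  have intF : ∀ a : ℝ, 0 ≤ a →
      IntegrableOn (fun y => (y + μ) * (c * Real.exp (-(b * |y| ^ p)))) (Ioi a) := by
    intro a ha
    refine MeasureTheory.IntegrableOn.congr_fun
      (((upper_integrableOn hp hb0 (by norm_num) ha).const_mul c).add
        ((upper_integrableOn hp hb0 (by norm_num) ha).const_mul (c * μ)))
      (fun y hy => ((habs_on a ha y hy)).symm) measurableSet_Ioi
  have keyIoi : ∀ a : ℝ, 0 ≤ a →
      (∫ y in Ioi a, (y + μ) * (c * Real.exp (-(b * |y| ^ p))))
        = c * (b ^ (-(2:ℝ) / p) / p * upperIncGamma (2 / p) (b * a ^ p))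
          + c * μ * (b ^ (-(1:ℝ) / p) / p * upperIncGamma (1 / p) (b * a ^ p)) := by
    intro a ha
    rw [setIntegral_congr_fun measurableSet_Ioi (habs_on a ha),
      integral_add ((upper_integrableOn hp hb0 (by norm_num) ha).const_mul c)
        ((upper_integrableOn hp hb0 (by norm_num) ha).const_mul (c * μ)),
      integral_const_mul, integral_const_mul,
      upper_eval hp hb0 (by norm_num : (-1:ℝ) < 1) ha,
      upper_eval hp hb0 (by norm_num : (-1:ℝ) < 0) ha]
    norm_num
  -- constants
  have hbinv : ∀ r : ℝ, b ^ (-r / p) = (p * σ ^ p) ^ (r / p) := by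
    intro r
    rw [hb, ← rpow_neg_one (p * σ ^ p), ← rpow_mul (by positivity)]
    congr 1; ring
  have hK1 : c * (b ^ (-(1:ℝ) / p) / p) = 1 / (2 * Real.Gamma (1 / p)) := by
    rw [hbinv, mul_rpow hp.le hσp.le, ← rpow_mul hσ.le, mul_one_div_cancel hp.ne', rpow_one,
      hc]
    have hpp : p ^ (1 - 1 / p) * p ^ ((1:ℝ) / p) = p := by
      rw [← rpow_add hp, sub_add_cancel, rpow_one]
    have h3 : p ^ (1 - 1 / p) / (2 * σ * Real.Gamma (1 / p)) * (p ^ ((1:ℝ) / p) * σ / p)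
        = (p ^ (1 - 1 / p) * p ^ ((1:ℝ) / p)) * σ / (2 * σ * Real.Gamma (1 / p) * p) := by
      ring
    rw [h3, hpp]
    field_simp
  have hK2 : c * (b ^ (-(2:ℝ) / p) / p) = p ^ (1 / p) * σ / (2 * Real.Gamma (1 / p)) := by
    rw [hbinv, mul_rpow hp.le hσp.le, ← rpow_mul hσ.le, hc]
    have hσ2 : σ ^ (p * ((2:ℝ) / p)) = σ * σ := by
      rw [mul_div_cancel₀ _ hp.ne', show (2:ℝ) = ((2:ℕ):ℝ) by norm_num, rpow_natCast]
      ring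
    have hpp : p ^ (1 - 1 / p) * p ^ ((2:ℝ) / p) = p * p ^ ((1:ℝ) / p) := by
      have he : (1 - 1 / p) + (2:ℝ) / p = 1 + 1 / p := by ring
      rw [← rpow_add hp, he, rpow_add hp, rpow_one]
    rw [hσ2]
    have h3 : p ^ (1 - 1 / p) / (2 * σ * Real.Gamma (1 / p)) * (p ^ ((2:ℝ) / p) * (σ * σ) / p)
        = (p ^ (1 - 1 / p) * p ^ ((2:ℝ) / p)) * (σ * σ) / (2 * σ * Real.Gamma (1 / p) * p) := by
      ring
    rw [h3, hpp]
    field_simp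
  rw [step1, step2, step3]
  rcases le_or_gt 0 μ with hμ | hμ
  · -- case 0 ≤ μ
    have hTeq : b * μ ^ p = |μ| ^ p / (p * σ ^ p) := by
      rw [abs_of_nonneg hμ, hb, inv_mul_eq_div]
    have hsplit : Ioc (-μ) μ ∪ Ioi μ = Ioi (-μ) := Ioc_union_Ioi_eq_Ioi (neg_le_self hμ)
    have hFcont : Continuous fun y : ℝ => (y + μ) * (c * Real.exp (-(b * |y| ^ p))) :=
      (continuous_id.add continuous_const).mul habs_cont
    have hGint : ∀ a b' : ℝ,
        IntervalIntegrable (fun y => c * Real.exp (-(b * |y| ^ p))) volume a b' :=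
      fun a b' => habs_cont.intervalIntegrable a b'
    have hrefl : (∫ y in (-μ)..μ, (y + μ) * (c * Real.exp (-(b * |y| ^ p))))
        = ∫ y in (-μ)..μ, (-y + μ) * (c * Real.exp (-(b * |-y| ^ p))) := by
      have h := intervalIntegral.integral_comp_neg (a := -μ) (b := μ)
        (f := fun y => (y + μ) * (c * Real.exp (-(b * |y| ^ p))))
      rw [neg_neg] at h
      exact h.symm
    have hsym : (∫ y in (-μ)..μ, (y + μ) * (c * Real.exp (-(b * |y| ^ p))))
        = μ * ∫ y in (-μ)..μ, c * Real.exp (-(b * |y| ^ p)) := by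
      have h2 : (∫ y in (-μ)..μ, (y + μ) * (c * Real.exp (-(b * |y| ^ p))))
            + (∫ y in (-μ)..μ, (y + μ) * (c * Real.exp (-(b * |y| ^ p))))
          = ∫ y in (-μ)..μ, (2 * μ) * (c * Real.exp (-(b * |y| ^ p))) := by
        have hFneg : IntervalIntegrable
            (fun y : ℝ => (-y + μ) * (c * Real.exp (-(b * |-y| ^ p)))) volume (-μ) μ :=
          (hFcont.comp continuous_neg).intervalIntegrable _ _
        nth_rewrite 2 [hrefl]
        rw [← intervalIntegral.integral_add (hFcont.intervalIntegrable _ _) hFneg]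
        refine intervalIntegral.integral_congr (fun y _ => ?_)
        simp only [abs_neg]
        ring
      rw [intervalIntegral.integral_const_mul] at h2
      linarith
    have hhalf : (∫ y in (-μ)..μ, c * Real.exp (-(b * |y| ^ p)))
        = 2 * ∫ y in Ioc (0:ℝ) μ, c * Real.exp (-(b * |y| ^ p)) := by
      have hadj := intervalIntegral.integral_add_adjacent_intervals (hGint (-μ) 0) (hGint 0 μ)
      have hneg : (∫ y in (-μ)..(0:ℝ), c * Real.exp (-(b * |y| ^ p)))
          = ∫ y in (0:ℝ)..μ, c * Real.exp (-(b * |y| ^ p)) := by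
        have h := intervalIntegral.integral_comp_neg (a := (0:ℝ)) (b := μ)
          (f := fun y => c * Real.exp (-(b * |y| ^ p)))
        simp only [abs_neg, neg_zero] at h
        exact h.symm
      rw [← hadj, hneg, intervalIntegral.integral_of_le hμ]
      ring
    have hlower : (∫ y in Ioc (0:ℝ) μ, c * Real.exp (-(b * |y| ^ p)))
        = c * (b ^ (-(1:ℝ) / p) / p * lowerIncGamma (1 / p) (b * μ ^ p)) := by
      have h1 : ∀ y ∈ Ioc (0:ℝ) μ, c * Real.exp (-(b * |y| ^ p))
          = c * (y ^ (0:ℝ) * Real.exp (-(b * y ^ p))) := by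
        intro y hy
        rw [abs_of_pos hy.1, rpow_zero, one_mul]
      rw [setIntegral_congr_fun measurableSet_Ioc h1, integral_const_mul,
        lower_eval hp hb0 (by norm_num : (-1:ℝ) < 0) hμ]
      norm_num
    have hIoc_val : (∫ y in Ioc (-μ) μ, (y + μ) * (c * Real.exp (-(b * |y| ^ p))))
        = μ * (2 * (c * (b ^ (-(1:ℝ) / p) / p * lowerIncGamma (1 / p) (b * μ ^ p)))) := by
      rw [← intervalIntegral.integral_of_le (neg_le_self hμ), hsym, hhalf, hlower]
    rw [← hsplit, setIntegral_union (Ioc_disjoint_Ioi le_rfl) measurableSet_Ioi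
      (hFcont.integrableOn_Ioc) (intF μ hμ), hIoc_val, keyIoi μ hμ, hTeq]
    have hrel := gamma_split (s := 1 / p) (T := |μ| ^ p / (p * σ ^ p))
      (by positivity) (by positivity)
    have e1 : c * (b ^ (-(1:ℝ) / p) / p * lowerIncGamma (1 / p) (|μ| ^ p / (p * σ ^ p)))
        = 1 / (2 * Real.Gamma (1 / p)) * lowerIncGamma (1 / p) (|μ| ^ p / (p * σ ^ p)) := by
      rw [← mul_assoc, ← hK1]
    have e2 : c * (b ^ (-(2:ℝ) / p) / p * upperIncGamma (2 / p) (|μ| ^ p / (p * σ ^ p)))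
        = p ^ (1 / p) * σ / (2 * Real.Gamma (1 / p))
          * upperIncGamma (2 / p) (|μ| ^ p / (p * σ ^ p)) := by
      rw [← mul_assoc, ← hK2]
    have e3 : c * μ * (b ^ (-(1:ℝ) / p) / p * upperIncGamma (1 / p) (|μ| ^ p / (p * σ ^ p)))
        = μ * (1 / (2 * Real.Gamma (1 / p)) * upperIncGamma (1 / p) (|μ| ^ p / (p * σ ^ p))) := by
      rw [← hK1]; ring
    have hu1 : upperIncGamma (1 / p) (|μ| ^ p / (p * σ ^ p))
        = Real.Gamma (1 / p) - lowerIncGamma (1 / p) (|μ| ^ p / (p * σ ^ p)) := by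
      linarith
    rcases eq_or_lt_of_le hμ with h0 | h0
    · rw [← h0] at e2 ⊢
      simp only [Real.sign_zero, zero_mul, mul_zero, zero_add, add_zero]
      rw [e2]
      field_simp
    · rw [Real.sign_of_pos h0, regIncGamma, e1, e2, e3, hu1]
      field_simp
      ring
  · -- case μ < 0
    have hnegμ : (0:ℝ) ≤ -μ := by linarith
    have hTeq : b * (-μ) ^ p = |μ| ^ p / (p * σ ^ p) := by
      rw [abs_of_neg hμ, hb, inv_mul_eq_div]
    rw [keyIoi (-μ) hnegμ, hTeq, Real.sign_of_neg hμ, regIncGamma]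
    have hrel := gamma_split (s := 1 / p) (T := |μ| ^ p / (p * σ ^ p))
      (by positivity) (by positivity)
    have e2 : c * (b ^ (-(2:ℝ) / p) / p * upperIncGamma (2 / p) (|μ| ^ p / (p * σ ^ p)))
        = p ^ (1 / p) * σ / (2 * Real.Gamma (1 / p))
          * upperIncGamma (2 / p) (|μ| ^ p / (p * σ ^ p)) := by
      rw [← mul_assoc, ← hK2]
    have e3 : c * μ * (b ^ (-(1:ℝ) / p) / p * upperIncGamma (1 / p) (|μ| ^ p / (p * σ ^ p)))
        = μ * (1 / (2 * Real.Gamma (1 / p)) * upperIncGamma (1 / p) (|μ| ^ p / (p * σ ^ p))) := by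
      rw [← hK1]; ring
    have hu1 : upperIncGamma (1 / p) (|μ| ^ p / (p * σ ^ p))
        = Real.Gamma (1 / p) - lowerIncGamma (1 / p) (|μ| ^ p / (p * σ ^ p)) := by
      linarith
    rw [e2, e3, hu1]
    field_simp
    ring
end

section
/- Let p > 0, μ ∈ ℝ, σ > 0, and let ℙ_X be the Rectified Generalized Gaussian probability measure ℙ_X = Φ_p(−μ/σ) · δ₀ + (1 − Φ_p(−μ/σ)) · ℙ_{TGN}, where δ₀ is the Dirac measure at 0, Φ_p is the CDF of the standard Generalized Gaussian density f_{p,0,1}, and ℙ_{TGN} is the Generalized Gaussian law with density f_{p,μ,σ} conditioned on (0,∞). Then for every Borel set A ⊆ ℝ, ℙ_X(A) = ∫_A f dν, where ν := λ + δ₀ (λ Lebesgue measure), and f(x) = Φ_p(−μ/σ) · 1_{{0}}(x) + (p^{1−1/p}/(2σΓ(1/p))) · exp(−|x−μ|^p/(p σ^p)) · 1_{(0,∞)}(x). In particular, f is the Radon–Nikodym derivative of ℙ_X with respect to ν. -/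
open MeasureTheory Real
open Set

section aux

variable {p μ σ b : ℝ}

lemma ggPdf_pos (hp : 0 < p) (hσ : 0 < σ) (x : ℝ) : 0 < ggPdf p μ σ x := by
  unfold ggPdf
  have h2 : (0:ℝ) < Real.Gamma (1/p) := Real.Gamma_pos_of_pos (by positivity)
  positivity

lemma ggPdf_continuous (hp : 0 < p) : Continuous (ggPdf p μ σ) := by
  unfold ggPdf
  have h : Continuous fun x : ℝ => -(|x - μ| ^ p) / (p * σ ^ p) :=
    (((continuous_id.sub continuous_const).abs.rpow_const
      (fun x => Or.inr hp.le)).neg).div_const _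
  exact continuous_const.mul (Real.continuous_exp.comp h)

lemma integrableOn_exp_neg_rpow_Ioi (hp : 0 < p) :
    IntegrableOn (fun x : ℝ => Real.exp (-x ^ p)) (Ioi 0) := by
  refine (integrableOn_Ioi_comp_rpow_iff' _ (one_div_ne_zero hp.ne')).mp ?_
  refine ((Real.GammaIntegral_convergent (by positivity : (0:ℝ) < 1/p)).congr_fun
    (fun x hx => ?_) measurableSet_Ioi)
  rw [smul_eq_mul, ← Real.rpow_mul (le_of_lt hx), one_div_mul_cancel hp.ne', Real.rpow_one,
    mul_comm]

lemma integrableOn_exp_neg_mul_rpow_Ioi (hp : 0 < p) (hb : 0 < b) :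
    IntegrableOn (fun x : ℝ => Real.exp (-b * x ^ p)) (Ioi 0) := by
  have hc : (0:ℝ) < b ^ (1/p) := rpow_pos_of_pos hb _
  have h := (integrableOn_Ioi_comp_mul_left_iff (fun x : ℝ => Real.exp (-x ^ p)) 0 hc).mpr
    (by simpa using integrableOn_exp_neg_rpow_Ioi hp)
  refine h.congr_fun (fun x hx => ?_) measurableSet_Ioi
  dsimp only
  rw [Real.mul_rpow hc.le (le_of_lt hx), ← Real.rpow_mul hb.le, one_div_mul_cancel hp.ne',
    Real.rpow_one, neg_mul]

lemma ggPdf_std_eq (hp : 0 < p) (t : ℝ) :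
    ggPdf p 0 1 t = p ^ (1 - 1/p) / (2 * Real.Gamma (1/p)) * Real.exp (-p⁻¹ * |t| ^ p) := by
  unfold ggPdf
  rw [sub_zero, Real.one_rpow,
    show (2:ℝ) * 1 * Real.Gamma (1/p) = 2 * Real.Gamma (1/p) by ring,
    show ∀ a : ℝ, -a / (p * 1) = -p⁻¹ * a from fun a => by intros; ring]

lemma integrable_ggPdf_std (hp : 0 < p) : Integrable (ggPdf p 0 1) := by
  have heq : (ggPdf p 0 1) = fun t =>
      p ^ (1 - 1/p) / (2 * Real.Gamma (1/p)) * Real.exp (-p⁻¹ * |t| ^ p) := by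
    funext t; exact ggPdf_std_eq hp t
  rw [heq]
  refine Integrable.const_mul ?_ _
  have hIoi : IntegrableOn (fun t : ℝ => Real.exp (-p⁻¹ * |t| ^ p)) (Ioi 0) := by
    refine (integrableOn_exp_neg_mul_rpow_Ioi (b := p⁻¹) hp (by positivity)).congr_fun
      (fun x hx => ?_) measurableSet_Ioi
    rw [abs_of_pos hx]
  have hIic : IntegrableOn (fun t : ℝ => Real.exp (-p⁻¹ * |t| ^ p)) (Iic 0) := by
    rw [← Measure.map_neg_eq_self (volume : Measure ℝ)]
    have m : MeasurableEmbedding fun x : ℝ => -x := (Homeomorph.neg ℝ).measurableEmbedding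
    rw [m.integrableOn_map_iff]
    simp_rw [Function.comp_def, abs_neg, neg_preimage, neg_Iic, neg_zero]
    rw [integrableOn_Ici_iff_integrableOn_Ioi]
    exact hIoi
  have := hIic.union hIoi
  rwa [Iic_union_Ioi, integrableOn_univ] at this

lemma integral_ggPdf_std (hp : 0 < p) : ∫ t, ggPdf p 0 1 t = 1 := by
  have hΓ : (0:ℝ) < Real.Gamma (1/p) := Real.Gamma_pos_of_pos (by positivity)
  calc ∫ t, ggPdf p 0 1 t
      = ∫ t, p ^ (1 - 1/p) / (2 * Real.Gamma (1/p)) * Real.exp (-p⁻¹ * |t| ^ p) := by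
        simp_rw [ggPdf_std_eq hp]
    _ = p ^ (1 - 1/p) / (2 * Real.Gamma (1/p)) * ∫ t, Real.exp (-p⁻¹ * |t| ^ p) :=
        integral_const_mul _ _
    _ = p ^ (1 - 1/p) / (2 * Real.Gamma (1/p)) *
          (2 * ∫ t in Ioi (0:ℝ), Real.exp (-p⁻¹ * t ^ p)) := by
        rw [integral_comp_abs (f := fun s => Real.exp (-p⁻¹ * s ^ p))]
    _ = 1 := by
        rw [integral_exp_neg_mul_rpow hp (by positivity), Real.Gamma_add_one (by positivity),
          show (-1 : ℝ)/p = -(1/p) by ring, Real.rpow_neg (by positivity),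
          Real.inv_rpow hp.le, inv_inv]
        have hpow : p ^ (1 - 1/p) * p ^ ((1:ℝ)/p) = p := by
          rw [← Real.rpow_add hp, sub_add_cancel, Real.rpow_one]
        have hpow' : p ^ (1 - 1/p) * p ^ ((1:ℝ)/p) * p⁻¹ = 1 := by
          rw [hpow]; exact mul_inv_cancel₀ hp.ne'
        rw [div_mul_eq_mul_div, div_eq_one_iff_eq (ne_of_gt (by positivity))]
        linear_combination (2 * Real.Gamma (1/p)) * hpow'

lemma ggPdf_scaling (hp : 0 < p) (hσ : 0 < σ) (x : ℝ) :
    ggPdf p μ σ x = σ⁻¹ * ggPdf p 0 1 ((x - μ) / σ) := by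
  unfold ggPdf
  rw [sub_zero, Real.one_rpow, abs_div, abs_of_pos hσ,
    Real.div_rpow (abs_nonneg _) hσ.le,
    show -(|x - μ| ^ p / σ ^ p) / (p * 1) = -(|x - μ| ^ p) / (p * σ ^ p) by ring]
  ring

lemma integrable_ggPdf (hp : 0 < p) (hσ : 0 < σ) : Integrable (ggPdf p μ σ) := by
  have heq : ggPdf p μ σ = fun x => σ⁻¹ * ggPdf p 0 1 ((x - μ) / σ) := by
    funext x; exact ggPdf_scaling hp hσ x
  rw [heq]
  refine Integrable.const_mul ?_ _
  have h1 : Integrable (fun y : ℝ => ggPdf p 0 1 (y / σ)) := by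
    simp_rw [div_eq_mul_inv]
    exact (integrable_ggPdf_std hp).comp_mul_right' (inv_ne_zero hσ.ne')
  exact h1.comp_sub_right μ

lemma setIntegral_ggPdf_Ioi (hp : 0 < p) (hσ : 0 < σ) :
    ∫ x in Ioi (0:ℝ), ggPdf p μ σ x = ∫ y in Ioi (-(μ/σ)), ggPdf p 0 1 y := by
  have hind : ∀ x : ℝ, indicator (Ioi (0:ℝ)) (ggPdf p μ σ) x
      = σ⁻¹ * indicator (Ioi (-(μ/σ))) (ggPdf p 0 1) ((x - μ) / σ) := by
    intro x
    have hmem : (x - μ) / σ ∈ Ioi (-(μ/σ)) ↔ x ∈ Ioi (0:ℝ) := by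
      rw [mem_Ioi, mem_Ioi, ← neg_div, div_lt_div_iff_of_pos_right hσ]
      constructor <;> intro h <;> linarith
    by_cases hx : x ∈ Ioi (0:ℝ)
    · rw [indicator_of_mem hx, indicator_of_mem (hmem.mpr hx), ggPdf_scaling hp hσ]
    · rw [indicator_of_notMem hx, indicator_of_notMem (fun h => hx (hmem.mp h)), mul_zero]
  calc ∫ x in Ioi (0:ℝ), ggPdf p μ σ x
      = ∫ x, indicator (Ioi (0:ℝ)) (ggPdf p μ σ) x := (integral_indicator measurableSet_Ioi).symm
    _ = ∫ x, σ⁻¹ * indicator (Ioi (-(μ/σ))) (ggPdf p 0 1) ((x - μ) / σ) := by simp_rw [hind]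
    _ = σ⁻¹ * ∫ x, indicator (Ioi (-(μ/σ))) (ggPdf p 0 1) ((x - μ) / σ) := integral_const_mul _ _
    _ = σ⁻¹ * ∫ y, indicator (Ioi (-(μ/σ))) (ggPdf p 0 1) (y / σ) := by
        rw [integral_sub_right_eq_self
          (fun y => indicator (Ioi (-(μ/σ))) (ggPdf p 0 1) (y / σ)) μ]
    _ = σ⁻¹ * (|σ| • ∫ y, indicator (Ioi (-(μ/σ))) (ggPdf p 0 1) y) := by
        rw [Measure.integral_comp_div (indicator (Ioi (-(μ/σ))) (ggPdf p 0 1)) σ]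
    _ = ∫ y in Ioi (-(μ/σ)), ggPdf p 0 1 y := by
        rw [integral_indicator measurableSet_Ioi, abs_of_pos hσ, smul_eq_mul, ← mul_assoc,
          inv_mul_cancel₀ hσ.ne', one_mul]


lemma ggCdf_nonneg (hp : 0 < p) (c : ℝ) : 0 ≤ ggCdf p c :=
  setIntegral_nonneg measurableSet_Iic fun x _ => (ggPdf_pos hp one_pos x).le

lemma one_sub_ggCdf (hp : 0 < p) (c : ℝ) :
    1 - ggCdf p c = ∫ y in Ioi c, ggPdf p 0 1 y := by
  have hi := integrable_ggPdf_std hp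
  have h := intervalIntegral.integral_Iic_add_Ioi (b := c) (μ := volume) hi.integrableOn hi.integrableOn
  rw [integral_ggPdf_std hp] at h
  unfold ggCdf
  linarith

lemma ggCdf_lt_one (hp : 0 < p) (c : ℝ) : ggCdf p c < 1 := by
  have hpos : 0 < ∫ y in Ioi c, ggPdf p 0 1 y := by
    rw [setIntegral_pos_iff_support_of_nonneg_ae
      (ae_of_all _ fun x => (ggPdf_pos hp one_pos x).le) (integrable_ggPdf_std hp).integrableOn]
    have hs : Function.support (ggPdf p 0 1) = univ := by
      ext x; simp [Function.mem_support, (ggPdf_pos hp one_pos x).ne']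
    rw [hs, univ_inter, Real.volume_Ioi]
    exact ENNReal.zero_lt_top
  have := one_sub_ggCdf hp c
  linarith

end aux

/-- The Generalized Gaussian law `ℙ_{GN}`, with density `f_{p,μ,σ}` w.r.t. Lebesgue. -/
noncomputable def ggMeasure (p μ σ : ℝ) : Measure ℝ :=
  volume.withDensity (fun x => ENNReal.ofReal (ggPdf p μ σ x))

/-- The Truncated Generalized Gaussian law: `ℙ_{GN}` conditioned on `(0,∞)`. -/
noncomputable def tgnMeasure (p μ σ : ℝ) : Measure ℝ :=
  (ggMeasure p μ σ (Set.Ioi 0))⁻¹ • (ggMeasure p μ σ).restrict (Set.Ioi 0)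

/-- The Rectified Generalized Gaussian probability measure, as the mixture
`ℙ_X = Φ_p(−μ/σ) · δ₀ + (1 − Φ_p(−μ/σ)) · ℙ_{TGN}`. -/
noncomputable def rgnMeasure (p μ σ : ℝ) : Measure ℝ :=
  ENNReal.ofReal (ggCdf p (-(μ / σ))) • Measure.dirac 0
    + ENNReal.ofReal (1 - ggCdf p (-(μ / σ))) • tgnMeasure p μ σ

/-- The Radon–Nikodym derivative of the Rectified Generalized Gaussian with respect to
the mixed measure `ν = λ + δ₀`:
`f(x) = Φ_p(−μ/σ)·1_{{0}}(x) + f_{p,μ,σ}(x)·1_{(0,∞)}(x)`. -/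
noncomputable def rgnPdf (p μ σ : ℝ) (x : ℝ) : ℝ :=
  ggCdf p (-(μ / σ)) * Set.indicator {0} (fun _ => (1 : ℝ)) x
    + ggPdf p μ σ x * Set.indicator (Set.Ioi 0) (fun _ => (1 : ℝ)) x

section aux2

variable {p μ σ : ℝ}

lemma ggMeasure_Ioi (hp : 0 < p) (hσ : 0 < σ) :
    ggMeasure p μ σ (Set.Ioi 0) = ENNReal.ofReal (1 - ggCdf p (-(μ / σ))) := by
  rw [ggMeasure, withDensity_apply _ measurableSet_Ioi,
    ← ofReal_integral_eq_lintegral_ofReal (integrable_ggPdf hp hσ).integrableOn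
      (ae_of_all _ fun x => (ggPdf_pos hp hσ x).le),
    setIntegral_ggPdf_Ioi hp hσ, one_sub_ggCdf hp]

end aux2

/-- **Radon–Nikodym derivative of the Rectified Generalized Gaussian.**
For every Borel set `A ⊆ ℝ`, `ℙ_X(A) = ∫_A f dν` where `ν = λ + δ₀` and
`f(x) = Φ_p(−μ/σ)·1_{{0}}(x) + (p^{1−1/p}/(2σΓ(1/p))) e^{−|x−μ|^p/(pσ^p)}·1_{(0,∞)}(x)`. -/
theorem rgnMeasure_eq_setLIntegral_rgnPdf (p μ σ : ℝ) (hp : 0 < p) (hσ : 0 < σ)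
    (A : Set ℝ) (hA : MeasurableSet A) :
    rgnMeasure p μ σ A =
      ∫⁻ x in A, ENNReal.ofReal (rgnPdf p μ σ x) ∂(volume + Measure.dirac 0) := by
  classical
  set c : ℝ := ggCdf p (-(μ / σ)) with hc
  have hc0 : 0 ≤ c := ggCdf_nonneg hp _
  have hc1 : c < 1 := ggCdf_lt_one hp _
  have hmeasg : Measurable (ggPdf p μ σ) := (ggPdf_continuous hp).measurable
  have hmeasf : Measurable (rgnPdf p μ σ) := by
    unfold rgnPdf
    exact (measurable_const.mul
        (measurable_const.indicator (measurableSet_singleton 0))).add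
      (hmeasg.mul (measurable_const.indicator measurableSet_Ioi))
  -- RHS
  rw [Measure.restrict_add, lintegral_add_measure]
  have hdirac : ∫⁻ x in A, ENNReal.ofReal (rgnPdf p μ σ x) ∂(Measure.dirac 0)
      = (Set.indicator A (fun _ => ENNReal.ofReal c)) 0 := by
    rw [restrict_dirac' hA]
    by_cases h0 : (0:ℝ) ∈ A
    · rw [if_pos h0, lintegral_dirac' _ hmeasf.ennreal_ofReal,
        Set.indicator_of_mem h0]
      unfold rgnPdf
      rw [Set.indicator_of_mem (Set.mem_singleton 0),
        Set.indicator_of_notMem (by simp : (0:ℝ) ∉ Set.Ioi (0:ℝ))]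
      norm_num
      rfl
    · rw [if_neg h0, lintegral_zero_measure, Set.indicator_of_notMem h0]
  have hvol : ∫⁻ x in A, ENNReal.ofReal (rgnPdf p μ σ x) ∂volume
      = ggMeasure p μ σ (A ∩ Set.Ioi 0) := by
    have hsplit : ∀ x, ENNReal.ofReal (rgnPdf p μ σ x)
        = ENNReal.ofReal (c * Set.indicator {0} (fun _ => (1:ℝ)) x)
          + ENNReal.ofReal (ggPdf p μ σ x * Set.indicator (Set.Ioi 0) (fun _ => (1:ℝ)) x) := by
      intro x
      refine ENNReal.ofReal_add (mul_nonneg hc0 ?_) (mul_nonneg (ggPdf_pos hp hσ x).le ?_) <;>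
        exact Set.indicator_nonneg (fun _ _ => zero_le_one) x
    simp_rw [hsplit]
    rw [lintegral_add_left (f := fun x => ENNReal.ofReal (c * Set.indicator {0} (fun _ => (1:ℝ)) x))
      ((measurable_const.mul
      (measurable_const.indicator (measurableSet_singleton 0))).ennreal_ofReal)]
    have h1 : ∫⁻ x in A, ENNReal.ofReal (c * Set.indicator {0} (fun _ => (1:ℝ)) x) ∂volume
        = 0 := by
      have hae : ∀ᵐ x ∂(volume.restrict A),
          ENNReal.ofReal (c * Set.indicator {0} (fun _ => (1:ℝ)) x) = 0 := by
        refine ae_restrict_of_ae ?_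
        have h0 : (volume : Measure ℝ) ({0} : Set ℝ) = 0 := volume_singleton
        filter_upwards [measure_eq_zero_iff_ae_notMem.mp h0] with x hx
        rw [Set.indicator_of_notMem hx, mul_zero, ENNReal.ofReal_zero]
      rw [lintegral_congr_ae hae, lintegral_zero]
    have h2 : (fun x => ENNReal.ofReal
          (ggPdf p μ σ x * Set.indicator (Set.Ioi 0) (fun _ => (1:ℝ)) x))
        = Set.indicator (Set.Ioi 0) (fun x => ENNReal.ofReal (ggPdf p μ σ x)) := by
      ext x
      by_cases hx : x ∈ Set.Ioi (0:ℝ)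
      · rw [Set.indicator_of_mem hx, Set.indicator_of_mem hx, mul_one]
      · rw [Set.indicator_of_notMem hx, Set.indicator_of_notMem hx, mul_zero,
          ENNReal.ofReal_zero]
    rw [h1, zero_add, h2, lintegral_indicator measurableSet_Ioi,
      Measure.restrict_restrict measurableSet_Ioi, Set.inter_comm,
      ggMeasure, withDensity_apply _ (hA.inter measurableSet_Ioi)]
  rw [hdirac, hvol]
  -- LHS
  have hkey : ggMeasure p μ σ (Set.Ioi 0) = ENNReal.ofReal (1 - c) := ggMeasure_Ioi hp hσ
  have hne0 : ENNReal.ofReal (1 - c) ≠ 0 := by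
    simp only [ne_eq, ENNReal.ofReal_eq_zero, not_le]; linarith
  rw [rgnMeasure, Measure.add_apply, Measure.smul_apply, Measure.smul_apply, tgnMeasure,
    Measure.smul_apply, Measure.restrict_apply hA, hkey, smul_eq_mul, smul_eq_mul, smul_eq_mul,
    ← mul_assoc, ENNReal.mul_inv_cancel hne0 ENNReal.ofReal_ne_top, one_mul,
    Measure.dirac_apply' _ hA]
  by_cases h0 : (0:ℝ) ∈ A
  · simp only [Set.indicator_of_mem h0, Pi.one_apply, mul_one]
    exact add_comm _ _
  · simp only [Set.indicator_of_notMem h0, mul_zero, zero_add, add_zero]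
end

section
/- Let X be a real random variable whose law ℙ_X is absolutely continuous with respect to Lebesgue measure λ, set Z := max(0, X), write d := ℙ_X((0,∞)) with 0 < d < 1, let ℙ_{X | (0,∞)} be the law of X conditioned on (0,∞) with density h := dℙ_{X|(0,∞)}/dλ, and let ν := δ₀ + λ. Assume the differential entropy H₁ := −∫_{(0,∞)} h log h dλ is well-defined and finite. Then the entropy of Z with respect to ν satisfies −∫ (dℙ_Z/dν) log(dℙ_Z/dν) dν = d · H₁ + d log(1/d) + (1 − d) log(1/(1 − d)). In particular, the ν-entropy of the rectified variable Z decomposes as the information dimension d times the differential entropy of the continuous part plus the binary Shannon entropy of the event {Z > 0}. -/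
open MeasureTheory ProbabilityTheory Real
open scoped ENNReal

lemma integrable_dirac_aux {f : ℝ → ℝ} (hf : StronglyMeasurable f) (a : ℝ) :
    Integrable f (Measure.dirac a) := by
  refine ⟨hf.aestronglyMeasurable, ?_⟩
  simp [HasFiniteIntegral, lintegral_dirac]

/-- **Entropy decomposition of a rectified random variable.**
Let `X` have law `ℙ_X ≪ λ`, `Z = max(0, X)`, `d = ℙ_X((0,∞)) ∈ (0,1)`, and let `h` be the
density of `ℙ_{X|(0,∞)}` with finite differential entropy `H₁ = −∫_{(0,∞)} h log h dλ`.
Then the entropy of `Z` w.r.t. `ν = δ₀ + λ` satisfies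
`−∫ (dℙ_Z/dν) log(dℙ_Z/dν) dν = d·H₁ + d log(1/d) + (1−d) log(1/(1−d))`. -/
theorem rectified_entropy_decomposition
    {Ω : Type*} [MeasureSpace Ω] [IsProbabilityMeasure (ℙ : Measure Ω)]
    (X : Ω → ℝ) (hmeas : Measurable X)
    (PX : Measure ℝ) (hPX : PX = Measure.map X ℙ)
    (hac : PX ≪ volume)
    (d : ℝ) (hd : d = (PX (Set.Ioi 0)).toReal) (hd0 : 0 < d) (hd1 : d < 1)
    (Pcond : Measure ℝ)
    (hPcond : Pcond = (PX (Set.Ioi 0))⁻¹ • PX.restrict (Set.Ioi 0))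
    (h : ℝ → ℝ) (hh : ∀ x, h x = (Pcond.rnDeriv volume x).toReal)
    (H₁ : ℝ) (hH₁ : H₁ = -∫ x in Set.Ioi (0 : ℝ), h x * Real.log (h x))
    (hH₁int : IntegrableOn (fun x => h x * Real.log (h x)) (Set.Ioi 0) volume)
    (PZ : Measure ℝ) (hPZ : PZ = Measure.map (fun ω => max 0 (X ω)) ℙ)
    (ν : Measure ℝ) (hν : ν = Measure.dirac 0 + volume) :
    -∫ x, (PZ.rnDeriv ν x).toReal * Real.log ((PZ.rnDeriv ν x).toReal) ∂ν =
      d * H₁ + d * Real.log (1 / d) + (1 - d) * Real.log (1 / (1 - d)) := by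
  have hprob : IsProbabilityMeasure PX := by
    rw [hPX]; exact Measure.isProbabilityMeasure_map hmeas.aemeasurable
  set c : ℝ≥0∞ := PX (Set.Ioi 0) with hc
  have hc_top : c ≠ ∞ := (measure_lt_top _ _).ne
  have hc_toReal : c.toReal = d := hd.symm
  have hc0 : c ≠ 0 := by
    intro h0
    rw [h0] at hd
    simp at hd
    linarith
  have hc1 : c ≤ 1 := prob_le_one
  -- decomposition of PZ
  have hmax : Measurable fun x : ℝ => max 0 x := measurable_const.max measurable_id
  have hPZ' : PZ = (1 - c) • Measure.dirac 0 + PX.restrict (Set.Ioi 0) := by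
    have hmap : PZ = Measure.map (fun x => max 0 x) PX := by
      rw [hPZ, hPX, Measure.map_map hmax hmeas]; rfl
    have h1c : (1 : ℝ≥0∞) - c = PX (Set.Iic 0) := by
      rw [← Set.compl_Ioi, measure_compl measurableSet_Ioi (measure_ne_top _ _), measure_univ,
        hc]
    ext A hA
    rw [hmap, Measure.map_apply hmax hA]
    by_cases h0A : (0 : ℝ) ∈ A
    · have hpre : (fun x : ℝ => max 0 x) ⁻¹' A = Set.Iic 0 ∪ (A ∩ Set.Ioi 0) := by
        ext y
        by_cases hy : 0 < y
        · simp [Set.mem_preimage, max_eq_right hy.le, hy, not_le.mpr hy]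
        · push_neg at hy
          simp [Set.mem_preimage, max_eq_left hy, h0A, hy, not_lt.mpr hy]
      have hdisj : Disjoint (Set.Iic (0 : ℝ)) (A ∩ Set.Ioi 0) :=
        (Set.Iic_disjoint_Ioi le_rfl).mono_right Set.inter_subset_right
      rw [hpre, measure_union hdisj (hA.inter measurableSet_Ioi)]
      simp [Measure.dirac_apply' _ hA, h0A, Measure.restrict_apply hA, ← h1c]
    · have hpre : (fun x : ℝ => max 0 x) ⁻¹' A = A ∩ Set.Ioi 0 := by
        ext y
        by_cases hy : 0 < y
        · simp [Set.mem_preimage, max_eq_right hy.le, hy]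
        · push_neg at hy
          simp [Set.mem_preimage, max_eq_left hy, h0A, not_lt.mpr hy]
      rw [hpre]
      simp [Measure.dirac_apply' _ hA, h0A, Measure.restrict_apply hA]
  -- explicit density of PZ w.r.t. ν
  set g : ℝ → ℝ≥0∞ := fun x =>
    if x = 0 then 1 - c else (Set.Ioi 0).indicator (PX.rnDeriv volume) x with hgdef
  have hgm : Measurable g := by
    apply Measurable.ite (measurableSet_eq) measurable_const
    exact (Measure.measurable_rnDeriv _ _).indicator measurableSet_Ioi
  have hne0 : ∀ᵐ x ∂(volume : Measure ℝ), x ≠ 0 := by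
    rw [ae_iff]
    simpa using Real.volume_singleton (a := 0)
  have hwd : ν.withDensity g = PZ := by
    classical
    rw [hν, withDensity_add_measure, hPZ']
    congr 1
    · ext A hA
      rw [withDensity_apply _ hA, setLIntegral_dirac g]
      simp only [Measure.smul_apply, Measure.dirac_apply' _ hA, hgdef, smul_eq_mul]
      by_cases h0A : (0 : ℝ) ∈ A <;> simp [h0A]
    · have hgae : g =ᵐ[volume] (Set.Ioi 0).indicator (PX.rnDeriv volume) := by
        filter_upwards [hne0] with x hx
        simp [hgdef, hx]
      rw [withDensity_congr_ae hgae, withDensity_indicator measurableSet_Ioi,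
        ← restrict_withDensity measurableSet_Ioi, Measure.withDensity_rnDeriv_eq _ _ hac]
  have hSF : SigmaFinite ν := by rw [hν]; infer_instance
  have hrn : PZ.rnDeriv ν =ᵐ[ν] g := by
    rw [← hwd]; exact Measure.rnDeriv_withDensity ν hgm
  have hint_eq : ∫ x, (PZ.rnDeriv ν x).toReal * Real.log ((PZ.rnDeriv ν x).toReal) ∂ν
      = ∫ x, (g x).toReal * Real.log ((g x).toReal) ∂ν :=
    integral_congr_ae (hrn.mono fun x hx => by dsimp only; rw [hx])
  -- facts about Pcond
  have hPcond_ac : Pcond ≪ volume := by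
    rw [hPcond]
    exact ((Measure.absolutelyContinuous_of_le Measure.restrict_le_self).trans hac).smul_left _
  have hPcond_prob : IsProbabilityMeasure Pcond := by
    constructor
    rw [hPcond]
    simp only [Measure.smul_apply, Measure.restrict_apply MeasurableSet.univ, Set.univ_inter,
      smul_eq_mul, ← hc]
    exact ENNReal.inv_mul_cancel hc0 hc_top
  set F : ℝ → ℝ≥0∞ := fun x => c⁻¹ • (Set.Ioi 0).indicator (PX.rnDeriv volume) x with hFdef
  have hFm : Measurable fun x => (Set.Ioi 0).indicator (PX.rnDeriv volume) x :=
    (Measure.measurable_rnDeriv _ _).indicator measurableSet_Ioi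
  have hPcond_wd : Pcond = volume.withDensity F := by
    have hF' : F = c⁻¹ • fun x => (Set.Ioi 0).indicator (PX.rnDeriv volume) x := rfl
    rw [hPcond, hF', withDensity_smul _ hFm, withDensity_indicator measurableSet_Ioi,
      ← restrict_withDensity measurableSet_Ioi, Measure.withDensity_rnDeriv_eq _ _ hac, hc]
  have hhF : Pcond.rnDeriv volume =ᵐ[volume] F := by
    rw [hPcond_wd]
    exact Measure.rnDeriv_withDensity volume (hFm.const_smul c⁻¹)
  -- relation between h and the density of PX on (0,∞)
  have hrel : ∀ᵐ x ∂(volume : Measure ℝ), x ∈ Set.Ioi (0 : ℝ) →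
      (PX.rnDeriv volume x).toReal = d * h x := by
    filter_upwards [hhF] with x hx hxmem
    have : h x = (F x).toReal := by rw [hh, hx]
    rw [hFdef] at this
    simp only [Set.indicator_of_mem hxmem, smul_eq_mul, ENNReal.toReal_mul,
      ENNReal.toReal_inv, hc_toReal] at this
    rw [this]
    field_simp
  -- the integrand function
  set φ : ℝ → ℝ := fun x => (g x).toReal * Real.log ((g x).toReal) with hφdef
  have h1c_toReal : ((1 : ℝ≥0∞) - c).toReal = 1 - d := by
    rw [ENNReal.toReal_sub_of_le hc1 ENNReal.one_ne_top, ENNReal.toReal_one, hc_toReal]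
  have hφ0 : φ 0 = (1 - d) * Real.log (1 - d) := by
    simp [hφdef, hgdef, h1c_toReal]
  set ψ : ℝ → ℝ := (Set.Ioi 0).indicator (fun x => d * h x * Real.log (d * h x)) with hψdef
  have hφψ : φ =ᵐ[volume] ψ := by
    filter_upwards [hne0, hrel] with x hx hr
    by_cases hmem : x ∈ Set.Ioi (0 : ℝ)
    · simp [hφdef, hψdef, hgdef, hx, Set.indicator_of_mem hmem, hr hmem]
    · simp [hφdef, hψdef, hgdef, hx, Set.indicator_of_notMem hmem]
  -- pointwise identity
  have hnonneg : ∀ x, 0 ≤ h x := fun x => by rw [hh]; exact ENNReal.toReal_nonneg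
  have hχ : ∀ x, d * h x * Real.log (d * h x)
      = d * (h x * Real.log (h x)) + (d * Real.log d) * h x := by
    intro x
    rcases eq_or_lt_of_le (hnonneg x) with h0 | hpos
    · rw [← h0]; ring_nf
    · rw [Real.log_mul (ne_of_gt hd0) (ne_of_gt hpos)]; ring
  -- integrability of h
  have hfun : h = fun x => (Pcond.rnDeriv volume x).toReal := funext hh
  have hInt_h : IntegrableOn h (Set.Ioi 0) volume := by
    rw [hfun]; exact (Measure.integrable_toReal_rnDeriv (μ := Pcond) (ν := volume)).integrableOn
  have hInt_χ : IntegrableOn (fun x => d * h x * Real.log (d * h x)) (Set.Ioi 0) volume := by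
    have : IntegrableOn (fun x => d * (h x * Real.log (h x)) + (d * Real.log d) * h x)
        (Set.Ioi 0) volume := (hH₁int.const_mul d).add (hInt_h.const_mul _)
    exact this.congr_fun (fun x _ => (hχ x).symm) measurableSet_Ioi
  have hInt_ψ : Integrable ψ volume := by
    rw [hψdef]
    exact hInt_χ.integrable_indicator measurableSet_Ioi
  have hφsm : StronglyMeasurable φ :=
    ((hgm.ennreal_toReal).mul (Real.measurable_log.comp hgm.ennreal_toReal)).stronglyMeasurable
  have hInt_φ : Integrable φ volume := hInt_ψ.congr hφψ.symm
  -- total mass of h on (0,∞)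
  have hmass : ∫ x in Set.Ioi (0 : ℝ), h x = 1 := by
    rw [hfun, Measure.setIntegral_toReal_rnDeriv hPcond_ac]
    rw [measureReal_def, hPcond]
    simp only [Measure.smul_apply, Measure.restrict_apply measurableSet_Ioi, Set.inter_self,
      smul_eq_mul, ← hc]
    rw [ENNReal.inv_mul_cancel hc0 hc_top, ENNReal.toReal_one]
  -- compute the volume part
  have hvol : ∫ x, φ x ∂(volume : Measure ℝ) = d * (-H₁) + d * Real.log d := by
    rw [integral_congr_ae hφψ, hψdef, integral_indicator measurableSet_Ioi]
    have : ∫ x in Set.Ioi (0 : ℝ), d * h x * Real.log (d * h x)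
        = ∫ x in Set.Ioi (0 : ℝ), (d * (h x * Real.log (h x)) + (d * Real.log d) * h x) :=
      setIntegral_congr_fun measurableSet_Ioi fun x _ => hχ x
    rw [this, integral_add (hH₁int.const_mul d) (hInt_h.const_mul _), integral_const_mul,
      integral_const_mul, hmass, hH₁]
    ring
  -- final computation
  rw [hint_eq, hν]
  rw [integral_add_measure (integrable_dirac_aux hφsm 0) hInt_φ, integral_dirac, hφ0, hvol]
  have hlog1 : Real.log (1 / d) = -Real.log d := by rw [one_div, Real.log_inv]
  have hlog2 : Real.log (1 / (1 - d)) = -Real.log (1 - d) := by rw [one_div, Real.log_inv]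
  rw [hlog1, hlog2]
  ring
end

section
/- Let p > 0, μ ∈ ℝ, σ > 0. Let S be uniformly distributed on {−1, +1}, let G be Gamma-distributed with shape 1/p and rate 1, and let S and G be independent. Then the random variable X := μ + σ · S · (pG)^{1/p} has law absolutely continuous with respect to Lebesgue measure with density equal to the Generalized Gaussian density f_{p,μ,σ}(x) = (p^{1−1/p}/(2σΓ(1/p))) · exp(−|x−μ|^p/(p σ^p)). -/
open MeasureTheory ProbabilityTheory Real
open scoped ENNReal NNReal
set_option maxHeartbeats 1000000


lemma ggPdf_nonneg {p σ : ℝ} (hp : 0 < p) (hσ : 0 < σ) (μ x : ℝ) : 0 ≤ ggPdf p μ σ x := by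
  have h1 : 0 < Real.Gamma (1 / p) := Real.Gamma_pos_of_pos (by positivity)
  unfold ggPdf
  positivity

lemma measurable_ggPdf (p μ σ : ℝ) : Measurable fun x => ENNReal.ofReal (2 * ggPdf p μ σ x) := by
  unfold ggPdf
  fun_prop

lemma lintegral_image_1d {s : Set ℝ} {f f' : ℝ → ℝ}
    (hs : MeasurableSet s) (hf' : ∀ x ∈ s, HasDerivWithinAt f (f' x) s x)
    (hf : Set.InjOn f s) (g : ℝ → ℝ≥0∞) :
    ∫⁻ x in f '' s, g x = ∫⁻ x in s, ENNReal.ofReal |f' x| * g (f x) := by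
  simpa only [ContinuousLinearMap.det_toSpanSingleton] using
    MeasureTheory.lintegral_image_eq_lintegral_abs_det_fderiv_mul volume hs
      (fun x hx => (hf' x hx).hasFDerivWithinAt) hf g

lemma map_branch (p μ σ ε : ℝ) (hp : 0 < p) (hσ : 0 < σ) (hε : ε = 1 ∨ ε = -1) :
    Measure.map (fun g : ℝ => μ + σ * ε * (p * g) ^ (1 / p)) (gammaMeasure (1 / p) 1) =
      volume.withDensity
        ({x : ℝ | 0 < ε * (x - μ)}.indicator fun x => ENNReal.ofReal (2 * ggPdf p μ σ x)) := by
  have hεne : ε ≠ 0 := by rcases hε with h | h <;> simp [h]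
  have hε1 : ε * ε = 1 := by rcases hε with h | h <;> simp [h]
  have hεabs : |ε| = 1 := by rcases hε with h | h <;> simp [h]
  have hΓ : 0 < Real.Gamma (1 / p) := Real.Gamma_pos_of_pos (by positivity)
  set φ : ℝ → ℝ := fun g => μ + σ * ε * (p * g) ^ (1 / p) with hφ
  set D : ℝ → ℝ := fun g => σ * ε * (1 / p * (p * g) ^ (1 / p - 1) * p) with hD
  have hφmeas : Measurable φ := by fun_prop
  have hS : MeasurableSet {x : ℝ | 0 < ε * (x - μ)} := by
    have h : {x : ℝ | 0 < ε * (x - μ)} = (fun x => ε * (x - μ)) ⁻¹' Set.Ioi 0 := rfl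
    rw [h]
    exact (measurable_const.mul (measurable_id.sub measurable_const)) measurableSet_Ioi
  have himg : φ '' Set.Ioi 0 = {x : ℝ | 0 < ε * (x - μ)} := by
    ext x
    constructor
    · rintro ⟨g, hg, rfl⟩
      have hg' : (0:ℝ) < g := hg
      have ht : 0 < (p * g) ^ (1 / p) := Real.rpow_pos_of_pos (by positivity) _
      have h2 : ε * (φ g - μ) = ε * ε * (σ * (p * g) ^ (1 / p)) := by
        simp only [hφ]; ring
      show 0 < ε * (φ g - μ)
      rw [h2, hε1, one_mul]
      positivity
    · intro hx
      have hx' : 0 < ε * (x - μ) := hx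
      have hu : 0 < ε * (x - μ) / σ := by positivity
      refine ⟨(ε * (x - μ) / σ) ^ p / p, Set.mem_Ioi.mpr (by positivity), ?_⟩
      have h1 : p * ((ε * (x - μ) / σ) ^ p / p) = (ε * (x - μ) / σ) ^ p := by
        field_simp
      show μ + σ * ε * (p * ((ε * (x - μ) / σ) ^ p / p)) ^ (1 / p) = x
      rw [h1, one_div, Real.rpow_rpow_inv hu.le hp.ne']
      have h2 : σ * ε * (ε * (x - μ) / σ) = ε * ε * (x - μ) := by
        field_simp
      rw [h2, hε1, one_mul]; ring
  have hinj : Set.InjOn φ (Set.Ioi 0) := by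
    intro a ha b hb hab
    have hne : σ * ε ≠ 0 := mul_ne_zero hσ.ne' hεne
    have h1 : (p * a) ^ (1 / p) = (p * b) ^ (1 / p) := by
      refine mul_left_cancel₀ hne ?_
      simp only [hφ] at hab
      linarith
    have ha' : (0:ℝ) < a := ha
    have hb' : (0:ℝ) < b := hb
    have h2 : p * a = p * b :=
      Real.rpow_left_injOn (one_div_ne_zero hp.ne') (mul_pos hp ha').le (mul_pos hp hb').le h1
    exact mul_left_cancel₀ hp.ne' h2
  have hderiv : ∀ g : ℝ, 0 < g → HasDerivAt φ (D g) g := by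
    intro g hg
    have h1 : HasDerivAt (fun y : ℝ => p * y) p g := by
      simpa using (hasDerivAt_id g).const_mul p
    have h2 : HasDerivAt (fun y : ℝ => y ^ (1 / p)) (1 / p * (p * g) ^ (1 / p - 1)) (p * g) :=
      Real.hasDerivAt_rpow_const (Or.inl (by positivity))
    have h3 : HasDerivAt (fun y : ℝ => (p * y) ^ (1 / p))
        (1 / p * (p * g) ^ (1 / p - 1) * p) g := h2.comp g h1
    exact ((h3.const_mul (σ * ε)).const_add μ)
  have hkey : ∀ g : ℝ, 0 < g →
      ENNReal.ofReal |D g| * ENNReal.ofReal (2 * ggPdf p μ σ (φ g)) = gammaPDF (1 / p) 1 g := by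
    intro g hg
    have ht : (0:ℝ) < p * g := by positivity
    have htp : 0 < (p * g) ^ (1 / p - 1) := Real.rpow_pos_of_pos ht _
    have habsD : |D g| = σ * (p * g) ^ (1 / p - 1) := by
      have h1 : D g = σ * (p * g) ^ (1 / p - 1) * ε := by
        simp only [hD]; field_simp
      rw [h1, abs_mul, hεabs, mul_one, abs_of_pos (by positivity)]
    have habs2 : |φ g - μ| = σ * (p * g) ^ (1 / p) := by
      have htq : 0 < (p * g) ^ (1 / p) := Real.rpow_pos_of_pos ht _
      have h1 : φ g - μ = σ * (p * g) ^ (1 / p) * ε := by simp only [hφ]; ring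
      rw [h1, abs_mul, hεabs, mul_one, abs_of_pos (by positivity)]
    have hpow : |φ g - μ| ^ p = σ ^ p * (p * g) := by
      rw [habs2, Real.mul_rpow hσ.le (Real.rpow_pos_of_pos ht _).le, one_div,
        Real.rpow_inv_rpow ht.le hp.ne']
    have hσp : (0:ℝ) < σ ^ p := Real.rpow_pos_of_pos hσ _
    have hgg : ggPdf p μ σ (φ g) =
        p ^ (1 - 1 / p) / (2 * σ * Real.Gamma (1 / p)) * Real.exp (-g) := by
      unfold ggPdf
      rw [hpow]
      congr 2
      field_simp
    rw [← ENNReal.ofReal_mul (abs_nonneg _), gammaPDF_of_nonneg hg.le]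
    congr 1
    rw [habsD, hgg, Real.one_rpow]
    have hmul : (p * g) ^ (1 / p - 1) = p ^ (1 / p - 1) * g ^ (1 / p - 1) :=
      Real.mul_rpow hp.le hg.le
    have hpp : p ^ (1 / p - 1) * p ^ (1 - 1 / p) = 1 := by
      rw [← Real.rpow_add hp]; norm_num
    rw [hmul, one_mul]
    generalize p ^ (1 / p - 1) = A at hpp ⊢
    generalize p ^ (1 - 1 / p) = B at hpp ⊢
    generalize g ^ (1 / p - 1) = C
    generalize Real.exp (-g) = E
    field_simp
    linear_combination (C * E) * hpp
  ext s hs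
  rw [Measure.map_apply hφmeas hs, gammaMeasure, withDensity_apply _ (hφmeas hs),
    withDensity_apply _ hs, setLIntegral_indicator hS]
  have hA : MeasurableSet (Set.Ioi (0:ℝ) ∩ φ ⁻¹' s) := measurableSet_Ioi.inter (hφmeas hs)
  have hIic : ∫⁻ x in Set.Iic (0:ℝ), gammaPDF (1 / p) 1 x = 0 := by
    rw [← Measure.restrict_congr_set Iio_ae_eq_Iic,
      setLIntegral_congr_fun measurableSet_Iio
        (fun x hx => gammaPDF_of_neg hx)]
    simp
  have hzero : ∫⁻ x in φ ⁻¹' s \ Set.Ioi 0, gammaPDF (1 / p) 1 x = 0 := by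
    refine le_antisymm ?_ zero_le
    refine le_trans (lintegral_mono_set ?_) hIic.le
    intro x hx
    exact Set.mem_Iic.mpr (not_lt.mp hx.2)
  have hsplit : ∫⁻ x in φ ⁻¹' s, gammaPDF (1 / p) 1 x
      = ∫⁻ x in Set.Ioi 0 ∩ φ ⁻¹' s, gammaPDF (1 / p) 1 x := by
    rw [← lintegral_inter_add_diff (gammaPDF (1 / p) 1) (φ ⁻¹' s) measurableSet_Ioi, hzero,
      add_zero, Set.inter_comm]
  have hchain := lintegral_image_1d hA
      (fun x hx => ((hderiv x hx.1).hasDerivWithinAt))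
      (hinj.mono Set.inter_subset_left)
      (fun x => ENNReal.ofReal (2 * ggPdf p μ σ x))
  rw [Set.image_inter_preimage, himg] at hchain
  rw [hsplit, hchain]
  exact setLIntegral_congr_fun hA (fun x hx => (hkey x hx.1).symm)

lemma smul_prod'' {α β : Type*} [MeasurableSpace α] [MeasurableSpace β]
    (c : ℝ≥0∞) (μ : Measure α) (ν : Measure β) [SFinite ν] :
    (c • μ).prod ν = c • (μ.prod ν) := by
  ext s hs
  simp [Measure.prod_apply hs, lintegral_smul_measure]

/-- **Simulation of Generalized Gaussian random variables.**
If `S` is uniform on `{−1,+1}`, `G ∼ Gamma(1/p, 1)` and `S ⟂ G`, then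
`X = μ + σ·S·(pG)^{1/p}` has law with Lebesgue density `f_{p,μ,σ}`. -/
theorem genGaussian_simulation
    (p μ σ : ℝ) (hp : 0 < p) (hσ : 0 < σ)
    {Ω : Type*} [MeasureSpace Ω] [IsProbabilityMeasure (ℙ : Measure Ω)]
    (S G : Ω → ℝ) (hSmeas : Measurable S) (hGmeas : Measurable G)
    (hSlaw : Measure.map S ℙ =
      (1 / 2 : ENNReal) • Measure.dirac (-1 : ℝ) + (1 / 2 : ENNReal) • Measure.dirac (1 : ℝ))
    (hGlaw : Measure.map G ℙ = gammaMeasure (1 / p) 1)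
    (hindep : IndepFun S G ℙ) :
    Measure.map (fun ω => μ + σ * S ω * (p * G ω) ^ (1 / p)) ℙ =
      volume.withDensity (fun x => ENNReal.ofReal (ggPdf p μ σ x)) := by
  have hp' : 0 < 1 / p := by positivity
  have hprob : IsProbabilityMeasure (gammaMeasure (1 / p) 1) :=
    isProbabilityMeasure_gammaMeasure hp' one_pos
  set F : ℝ × ℝ → ℝ := fun q => μ + σ * q.1 * (p * q.2) ^ (1 / p) with hF
  have hFmeas : Measurable F := by fun_prop
  have hSG : Measure.map (fun ω => (S ω, G ω)) ℙ = (Measure.map S ℙ).prod (Measure.map G ℙ) :=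
    (ProbabilityTheory.indepFun_iff_map_prod_eq_prod_map_map hSmeas.aemeasurable
      hGmeas.aemeasurable).mp hindep
  have hmap : Measure.map (fun ω => μ + σ * S ω * (p * G ω) ^ (1 / p)) ℙ
      = Measure.map F (Measure.map (fun ω => (S ω, G ω)) ℙ) := by
    rw [Measure.map_map hFmeas (hSmeas.prodMk hGmeas)]
    rfl
  rw [hmap, hSG, hSlaw, hGlaw]
  rw [Measure.add_prod, smul_prod'', smul_prod'', Measure.dirac_prod, Measure.dirac_prod,
    Measure.map_add _ _ hFmeas, Measure.map_smul, Measure.map_smul,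
    Measure.map_map hFmeas measurable_prodMk_left,
    Measure.map_map hFmeas measurable_prodMk_left]
  have h1 : (F ∘ Prod.mk (-1 : ℝ)) = fun g : ℝ => μ + σ * (-1) * (p * g) ^ (1 / p) := rfl
  have h2 : (F ∘ Prod.mk (1 : ℝ)) = fun g : ℝ => μ + σ * 1 * (p * g) ^ (1 / p) := rfl
  rw [h1, h2, map_branch p μ σ (-1) hp hσ (Or.inr rfl), map_branch p μ σ 1 hp hσ (Or.inl rfl)]
  have hm : Measurable (fun x => ENNReal.ofReal (2 * ggPdf p μ σ x)) := measurable_ggPdf p μ σ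
  have hSneg : MeasurableSet {x : ℝ | 0 < (-1 : ℝ) * (x - μ)} :=
    (measurable_const.mul (measurable_id.sub measurable_const)) measurableSet_Ioi
  have hSpos : MeasurableSet {x : ℝ | 0 < (1 : ℝ) * (x - μ)} :=
    (measurable_const.mul (measurable_id.sub measurable_const)) measurableSet_Ioi
  have hmneg : Measurable ({x : ℝ | 0 < (-1 : ℝ) * (x - μ)}.indicator
      fun x => ENNReal.ofReal (2 * ggPdf p μ σ x)) := hm.indicator hSneg
  have hmpos : Measurable ({x : ℝ | 0 < (1 : ℝ) * (x - μ)}.indicator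
      fun x => ENNReal.ofReal (2 * ggPdf p μ σ x)) := hm.indicator hSpos
  rw [← withDensity_smul _ hmneg, ← withDensity_smul _ hmpos,
    ← withDensity_add_right _ (hmpos.const_smul _)]
  apply withDensity_congr_ae
  have hne : ∀ᵐ x : ℝ ∂volume, x ≠ μ := by
    rw [ae_iff]
    simp only [not_not, Set.setOf_eq_eq_singleton]
    exact measure_singleton μ
  filter_upwards [hne] with x hx
  have key : ∀ y : ℝ, (1 / 2 : ℝ≥0∞) * ENNReal.ofReal (2 * ggPdf p μ σ y)
      = ENNReal.ofReal (ggPdf p μ σ y) := by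
    intro y
    rw [ENNReal.ofReal_mul (by norm_num : (0:ℝ) ≤ 2)]
    rw [show ENNReal.ofReal (2:ℝ) = 2 by norm_num, ← mul_assoc, one_div,
      ENNReal.inv_mul_cancel two_ne_zero ENNReal.ofNat_ne_top, one_mul]
  rcases lt_or_gt_of_ne hx with h | h
  · have hmem : x ∈ {y : ℝ | 0 < (-1 : ℝ) * (y - μ)} := by
      simp only [Set.mem_setOf_eq]; linarith
    have hnot : x ∉ {y : ℝ | 0 < (1 : ℝ) * (y - μ)} := by
      simp only [Set.mem_setOf_eq]; intro hc; linarith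
    simp only [Pi.add_apply, Pi.smul_apply, Set.indicator_of_mem hmem,
      Set.indicator_of_notMem hnot, smul_eq_mul, mul_zero, add_zero]
    exact key x
  · have hmem : x ∈ {y : ℝ | 0 < (1 : ℝ) * (y - μ)} := by
      simp only [Set.mem_setOf_eq]; linarith
    have hnot : x ∉ {y : ℝ | 0 < (-1 : ℝ) * (y - μ)} := by
      simp only [Set.mem_setOf_eq]; intro hc; linarith
    simp only [Pi.add_apply, Pi.smul_apply, Set.indicator_of_mem hmem,
      Set.indicator_of_notMem hnot, smul_eq_mul, mul_zero, zero_add]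
    exact key x
end
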